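/- arXiv:2202.07929 — 7 statements merged into one kernel-verified Lean document; each statement's English description precedes it below -/
import Mathlib

section
/- Let G be an equimatchable graph and v a vertex of G. Then the vertex-deleted subgraph G − v is equimatchable if and only if either (i) v is a strong vertex of G, or (ii) every vertex of N(v) is a strong vertex of G − v. -/
open SimpleGraph

/-- `M` is a maximal matching of `G` (viewed as a subgraph of `G`): it is a matching and it is
not properly contained in any other matching of `G`. -/
def IsMaximalMatching {V : Type*} (G : SimpleGraph V) (M : G.Subgraph) : Prop :=
  M.IsMatching ∧ ∀ M' : G.Subgraph, M'.IsMatching → M ≤ M' → M' = M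

/-- `G` is equimatchable if all maximal matchings of `G` have the same cardinality. -/
def Equimatchable {V : Type*} (G : SimpleGraph V) : Prop :=
  ∀ M₁ M₂ : G.Subgraph, IsMaximalMatching G M₁ → IsMaximalMatching G M₂ →
    M₁.edgeSet.ncard = M₂.edgeSet.ncard

/-- The matching number ν(G): the maximum cardinality of a matching of `G`. -/
noncomputable def matchNum {V : Type*} (G : SimpleGraph V) : ℕ :=
  sSup {n : ℕ | ∃ M : G.Subgraph, M.IsMatching ∧ M.edgeSet.ncard = n}

/-- `G` is vertex-critical equimatchable (VCE): `G` is equimatchable and deleting any vertex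
yields a non-equimatchable graph. -/
def VCE {V : Type*} (G : SimpleGraph V) : Prop :=
  Equimatchable G ∧ ∀ v : V, ¬ Equimatchable (G.induce {u | u ≠ v})

/-- `G` is edge-critical equimatchable (ECE): `G` is equimatchable and deleting any edge
yields a non-equimatchable graph. -/
def ECE {V : Type*} (G : SimpleGraph V) : Prop :=
  Equimatchable G ∧ ∀ u v : V, G.Adj u v → ¬ Equimatchable (G.deleteEdges {s(u, v)})

/-- `G` is factor-critical: deleting any vertex yields a graph with a perfect matching. -/
def FactorCritical {V : Type*} (G : SimpleGraph V) : Prop :=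
  ∀ v : V, ∃ M : (G.induce {u | u ≠ v}).Subgraph, M.IsPerfectMatching

/-- `G` is 2-connected: at least 3 vertices, connected, and deleting any vertex leaves a
connected graph. -/
def TwoConnected {V : Type*} [Fintype V] (G : SimpleGraph V) : Prop :=
  3 ≤ Fintype.card V ∧ G.Connected ∧ ∀ v : V, (G.induce {u | u ≠ v}).Connected

/-- `G` is bipartite: its vertex set can be partitioned into two parts such that every edge
joins the two parts. -/
def IsBipartiteGraph {V : Type*} (G : SimpleGraph V) : Prop :=
  ∃ s : Set V, ∀ u w : V, G.Adj u w → (u ∈ s ↔ w ∉ s)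

/-- `G` is randomly matchable: every matching of `G` extends to a perfect matching. -/
def RandomlyMatchable {V : Type*} (G : SimpleGraph V) : Prop :=
  ∀ M : G.Subgraph, M.IsMatching → ∃ P : G.Subgraph, M ≤ P ∧ P.IsPerfectMatching

section Aux

set_option linter.unusedSectionVars false
set_option maxHeartbeats 1600000

variable {V : Type*} [Fintype V] {G : SimpleGraph V} {v : V}

/-- The inclusion homomorphism from `G − v` into `G`. -/
def incl (G : SimpleGraph V) (v : V) : G.induce {u | u ≠ v} →g G := ⟨Subtype.val, fun h => h⟩

lemma matching_eq_of_le {M M' : G.Subgraph} (hM' : M'.IsMatching)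
    (hle : M ≤ M') (he : M'.edgeSet ⊆ M.edgeSet) : M' = M := by
  have hadj : ∀ a b, M'.Adj a b ↔ M.Adj a b := fun a b =>
    ⟨fun h => (Subgraph.mem_edgeSet).1 (he (Subgraph.mem_edgeSet.2 h)), fun h => hle.2 h⟩
  ext a b
  · constructor
    · intro ha
      obtain ⟨w, hw, -⟩ := hM' ha
      exact M.edge_vert ((hadj a w).1 hw)
    · exact fun h => hle.1 h
  · exact hadj a b

lemma exists_maximal_matching_ge (M : G.Subgraph) (hM : M.IsMatching) :
    ∃ M', IsMaximalMatching G M' ∧ M ≤ M' := by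
  classical
  set T : Set ℕ := {n | ∃ M' : G.Subgraph, M'.IsMatching ∧ M ≤ M' ∧ M'.edgeSet.ncard = n}
  have hne : T.Nonempty := ⟨_, M, hM, le_refl M, rfl⟩
  have hbdd : BddAbove T := by
    refine ⟨Nat.card (Sym2 V), ?_⟩
    rintro n ⟨M', -, -, rfl⟩
    simpa [Set.ncard_univ] using Set.ncard_le_ncard (Set.subset_univ M'.edgeSet) Set.finite_univ
  obtain ⟨M₀, hM₀, hle₀, hcard⟩ := Nat.sSup_mem hne hbdd
  refine ⟨M₀, ⟨hM₀, ?_⟩, hle₀⟩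
  intro M'' hM'' hle''
  have h1 : M''.edgeSet.ncard ≤ sSup T := le_csSup hbdd ⟨M'', hM'', hle₀.trans hle'', rfl⟩
  have h2 := Set.eq_of_subset_of_ncard_le (Subgraph.edgeSet_mono hle'') (hcard ▸ h1)
    (Set.toFinite _)
  exact matching_eq_of_le hM'' hle'' h2.symm.subset

lemma map_incl_adj {M : (G.induce {u | u ≠ v}).Subgraph} {a b : ↥{u : V | u ≠ v}} :
    (M.map (incl G v)).Adj ↑a ↑b ↔ M.Adj a b := by
  constructor
  · rintro ⟨x, y, h, hx, hy⟩
    rwa [Subtype.val_injective hx, Subtype.val_injective hy] at h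
  · exact fun h => ⟨a, b, h, rfl, rfl⟩

lemma edgeSet_map_incl (M : (G.induce {u | u ≠ v}).Subgraph) :
    (M.map (incl G v)).edgeSet = Sym2.map Subtype.val '' M.edgeSet := by
  ext e
  refine Sym2.ind (fun a b => ?_) e
  simp only [Subgraph.mem_edgeSet, Subgraph.map_adj, Relation.Map, Set.mem_image]
  constructor
  · rintro ⟨x, y, h, rfl, rfl⟩
    exact ⟨s(x, y), h, rfl⟩
  · rintro ⟨e', he', hmap⟩
    induction e' using Sym2.ind with
    | _ x y =>
      rw [Sym2.map_pair_eq, Sym2.eq_iff] at hmap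
      rcases hmap with ⟨rfl, rfl⟩ | ⟨rfl, rfl⟩
      · exact ⟨x, y, he', rfl, rfl⟩
      · exact ⟨y, x, M.adj_symm he', rfl, rfl⟩

lemma ncard_map_incl (M : (G.induce {u | u ≠ v}).Subgraph) :
    (M.map (incl G v)).edgeSet.ncard = M.edgeSet.ncard := by
  rw [edgeSet_map_incl]
  exact Set.ncard_image_of_injective _ (Sym2.map.injective Subtype.val_injective)

lemma matching_map_incl {M : (G.induce {u | u ≠ v}).Subgraph} (hM : M.IsMatching) :
    (M.map (incl G v)).IsMatching :=
  hM.map (incl G v) Subtype.val_injective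

lemma not_mem_map_incl_verts (M : (G.induce {u | u ≠ v}).Subgraph) :
    v ∉ (M.map (incl G v)).verts := by
  rintro ⟨x, -, hx⟩
  exact x.2 hx

lemma claim_adj {M : (G.induce {u | u ≠ v}).Subgraph}
    (hMmax : IsMaximalMatching (G.induce {u | u ≠ v}) M)
    {M' : G.Subgraph} (hM' : M'.IsMatching) (hle : M.map (incl G v) ≤ M')
    {a b : V} (ha : a ≠ v) (hb : b ≠ v) (hadj : M'.Adj a b) :
    M.Adj ⟨a, ha⟩ ⟨b, hb⟩ := by
  by_contra hno
  have key : ∀ (x y : V) (hx : x ≠ v) (hy : y ≠ v), M'.Adj x y →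
      ¬ M.Adj ⟨x, hx⟩ ⟨y, hy⟩ → (⟨x, hx⟩ : ↥{u : V | u ≠ v}) ∉ M.verts := by
    intro x y hx hy hxy hnxy hmem
    obtain ⟨c, hc, -⟩ := hMmax.1 hmem
    have h1 : M'.Adj x ↑c := hle.2 (map_incl_adj.2 hc)
    obtain ⟨w, -, huniq⟩ := hM' (M'.edge_vert hxy)
    have hcy : (c : V) = y := by rw [huniq _ h1, huniq _ hxy]
    apply hnxy
    have : c = ⟨y, hy⟩ := Subtype.ext hcy
    rwa [← this]
  have hav := key a b ha hb hadj hno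
  have hbv := key b a hb ha (M'.adj_symm hadj) (fun h => hno (M.adj_symm h))
  have hGab : (G.induce {u | u ≠ v}).Adj ⟨a, ha⟩ ⟨b, hb⟩ := M'.adj_sub hadj
  have hdisj : Disjoint M.support ((G.induce {u | u ≠ v}).subgraphOfAdj hGab).support := by
    rw [hMmax.1.support_eq_verts, SimpleGraph.support_subgraphOfAdj]
    rw [Set.disjoint_right]
    rintro x (rfl | rfl) <;> assumption
  have hN := hMmax.1.sup (Subgraph.IsMatching.subgraphOfAdj hGab) hdisj
  have heq := hMmax.2 _ hN le_sup_left
  apply hno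
  have : (M ⊔ (G.induce {u | u ≠ v}).subgraphOfAdj hGab).Adj ⟨a, ha⟩ ⟨b, hb⟩ :=
    Or.inr (by simp)
  rwa [heq] at this

lemma card_ext_not_mem {M : (G.induce {u | u ≠ v}).Subgraph}
    (hMmax : IsMaximalMatching (G.induce {u | u ≠ v}) M)
    {M' : G.Subgraph} (hM' : M'.IsMatching) (hle : M.map (incl G v) ≤ M')
    (hv : v ∉ M'.verts) : M' = M.map (incl G v) := by
  refine matching_eq_of_le hM' hle ?_
  intro e he
  induction e using Sym2.ind with
  | _ a b =>
    rw [Subgraph.mem_edgeSet] at he ⊢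
    have ha : a ≠ v := fun h => hv (h ▸ M'.edge_vert he)
    have hb : b ≠ v := fun h => hv (h ▸ M'.edge_vert (M'.adj_symm he))
    exact (@map_incl_adj _ _ _ _ M ⟨a, ha⟩ ⟨b, hb⟩).2 (claim_adj hMmax hM' hle ha hb he)

lemma card_ext_mem {M : (G.induce {u | u ≠ v}).Subgraph}
    (hMmax : IsMaximalMatching (G.induce {u | u ≠ v}) M)
    {M' : G.Subgraph} (hM' : M'.IsMatching) (hle : M.map (incl G v) ≤ M')
    (hv : v ∈ M'.verts) : M'.edgeSet.ncard = M.edgeSet.ncard + 1 := by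
  obtain ⟨w, hw, huniq⟩ := hM' hv
  have hedge : M'.edgeSet = insert s(v, w) (M.map (incl G v)).edgeSet := by
    ext e
    induction e using Sym2.ind with
    | _ a b =>
      simp only [Subgraph.mem_edgeSet, Set.mem_insert_iff]
      constructor
      · intro he
        by_cases hav : a = v
        · subst hav
          left; rw [huniq _ he]
        · by_cases hbv : b = v
          · subst hbv
            left; rw [huniq _ (M'.adj_symm he), Sym2.eq_swap]
          · right
            exact (@map_incl_adj _ _ _ _ M ⟨a, hav⟩ ⟨b, hbv⟩).2
              (claim_adj hMmax hM' hle hav hbv he)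
      · rintro (he | he)
        · rw [Sym2.eq_iff] at he
          rcases he with ⟨rfl, rfl⟩ | ⟨rfl, rfl⟩
          · exact hw
          · exact M'.adj_symm hw
        · exact hle.2 he
  rw [hedge, Set.ncard_insert_of_notMem ?_ (Set.toFinite _), ncard_map_incl M]
  intro hmem
  exact not_mem_map_incl_verts M ((M.map (incl G v)).edge_vert (Subgraph.mem_edgeSet.1 hmem))

lemma restrict_maximal {M' : G.Subgraph} (hM'max : IsMaximalMatching G M')
    (hv : v ∉ M'.verts) :
    ∃ N : (G.induce {u | u ≠ v}).Subgraph, IsMaximalMatching (G.induce {u | u ≠ v}) N ∧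
      N.map (incl G v) = M' := by
  classical
  set N := M'.comap (incl G v) with hN
  have hNadj : ∀ a b : ↥{u : V | u ≠ v}, N.Adj a b ↔ M'.Adj ↑a ↑b := by
    intro a b
    exact ⟨fun h => h.2, fun h => ⟨M'.adj_sub h, h⟩⟩
  have hNmatch : N.IsMatching := by
    intro a ha
    have haM : (a : V) ∈ M'.verts := ha
    obtain ⟨w, hw, huniq⟩ := hM'max.1 haM
    have hwv : w ≠ v := fun h => hv (h ▸ M'.edge_vert (M'.adj_symm hw))
    refine ⟨⟨w, hwv⟩, (hNadj _ _).2 hw, ?_⟩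
    rintro ⟨y, hy⟩ hadj
    exact Subtype.ext (huniq _ ((hNadj _ _).1 hadj))
  have hmap : N.map (incl G v) = M' := by
    ext a b
    · constructor
      · rintro ⟨x, hx, rfl⟩; exact hx
      · intro ha
        have hav : a ≠ v := fun h => hv (h ▸ ha)
        exact ⟨⟨a, hav⟩, ha, rfl⟩
    · constructor
      · rintro ⟨x, y, h, rfl, rfl⟩; exact h.2
      · intro h
        have hav : a ≠ v := fun hh => hv (hh ▸ M'.edge_vert h)
        have hbv : b ≠ v := fun hh => hv (hh ▸ M'.edge_vert (M'.adj_symm h))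
        exact ⟨⟨a, hav⟩, ⟨b, hbv⟩, (hNadj _ _).2 h, rfl, rfl⟩
  refine ⟨N, ⟨hNmatch, ?_⟩, hmap⟩
  intro N'' hN'' hle
  have h1 : M' ≤ N''.map (incl G v) := hmap ▸ Subgraph.map_mono hle
  have h2 : (N''.map (incl G v)).IsMatching := hN''.map _ Subtype.val_injective
  have h3 := hM'max.2 _ h2 h1
  have h4 : N''.map (incl G v) = N.map (incl G v) := h3.trans hmap.symm
  ext a b
  · constructor
    · intro ha
      have : (a : V) ∈ (N.map (incl G v)).verts := h4 ▸ ⟨a, ha, rfl⟩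
      obtain ⟨x, hx, hxa⟩ := this
      rwa [← Subtype.val_injective hxa]
    · intro ha
      have : (a : V) ∈ (N''.map (incl G v)).verts := h4.symm ▸ ⟨a, ha, rfl⟩
      obtain ⟨x, hx, hxa⟩ := this
      rwa [← Subtype.val_injective hxa]
  · rw [← @map_incl_adj _ _ _ _ N'' a b, ← @map_incl_adj _ _ _ _ N a b, h4]

end Aux

/-- Let `G` be an equimatchable graph and `v` a vertex of `G`. Then `G − v` is equimatchable
if and only if either (i) `v` is a strong vertex of `G`, or (ii) every vertex of `N(v)` is a
strong vertex of `G − v`. -/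
theorem deleteVert_equimatchable_iff {V : Type*} [Fintype V] (G : SimpleGraph V)
    (hG : Equimatchable G) (v : V) :
    Equimatchable (G.induce {u | u ≠ v}) ↔
      ((∀ M : G.Subgraph, IsMaximalMatching G M → v ∈ M.verts) ∨
        (∀ u : {u : V // u ∈ {u | u ≠ v}}, G.Adj v ↑u →
          ∀ M : (G.induce {u | u ≠ v}).Subgraph,
            IsMaximalMatching (G.induce {u | u ≠ v}) M → u ∈ M.verts)) := by
  classical
  constructor
  · intro hH
    by_cases hstrong : ∀ M : G.Subgraph, IsMaximalMatching G M → v ∈ M.verts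
    · exact Or.inl hstrong
    · right
      push_neg at hstrong
      obtain ⟨M₀, hM₀max, hM₀v⟩ := hstrong
      obtain ⟨N₀, hN₀max, hN₀map⟩ := restrict_maximal hM₀max hM₀v
      intro u hu M hMmax
      by_contra humem
      have hvu : G.Adj v ↑u := hu
      set Mu := M.map (incl G v) with hMu_def
      have hMu : Mu.IsMatching := matching_map_incl hMmax.1
      have hdisj : Disjoint Mu.support (G.subgraphOfAdj hvu).support := by
        rw [hMu.support_eq_verts, SimpleGraph.support_subgraphOfAdj, Set.disjoint_right]
        rintro x (rfl | rfl)
        · exact not_mem_map_incl_verts M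
        · rintro ⟨y, hy, hyx⟩
          exact humem ((Subtype.val_injective hyx) ▸ hy)
      have hsup := hMu.sup (Subgraph.IsMatching.subgraphOfAdj hvu) hdisj
      obtain ⟨M', hM'max, hle'⟩ := exists_maximal_matching_ge _ hsup
      have hcard1 : (Mu ⊔ G.subgraphOfAdj hvu).edgeSet.ncard = M.edgeSet.ncard + 1 := by
        rw [Subgraph.edgeSet_sup, SimpleGraph.edgeSet_subgraphOfAdj, Set.union_singleton,
          Set.ncard_insert_of_notMem ?_ (Set.toFinite _), ncard_map_incl M]
        intro hmem
        exact not_mem_map_incl_verts M (Mu.edge_vert (Subgraph.mem_edgeSet.1 hmem))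
      have h2 : M.edgeSet.ncard + 1 ≤ M'.edgeSet.ncard := by
        rw [← hcard1]
        exact Set.ncard_le_ncard (Subgraph.edgeSet_mono hle') (Set.toFinite _)
      have h3 : M'.edgeSet.ncard = M₀.edgeSet.ncard := hG _ _ hM'max hM₀max
      have h4 : M₀.edgeSet.ncard = M.edgeSet.ncard := by
        rw [← hN₀map, ncard_map_incl]
        exact hH _ _ hN₀max hMmax
      omega
  · rintro (hstrong | hnb) <;> intro M₁ M₂ h₁ h₂
    · obtain ⟨M₁', hmax₁, hle₁⟩ := exists_maximal_matching_ge _ (matching_map_incl h₁.1)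
      obtain ⟨M₂', hmax₂, hle₂⟩ := exists_maximal_matching_ge _ (matching_map_incl h₂.1)
      have e₁ := card_ext_mem h₁ hmax₁.1 hle₁ (hstrong _ hmax₁)
      have e₂ := card_ext_mem h₂ hmax₂.1 hle₂ (hstrong _ hmax₂)
      have := hG _ _ hmax₁ hmax₂
      omega
    · have key : ∀ M : (G.induce {u | u ≠ v}).Subgraph,
          IsMaximalMatching (G.induce {u | u ≠ v}) M →
          ∃ M', IsMaximalMatching G M' ∧ M'.edgeSet.ncard = M.edgeSet.ncard := by
        intro M hM
        obtain ⟨M', hmax, hle⟩ := exists_maximal_matching_ge _ (matching_map_incl hM.1)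
        have hv : v ∉ M'.verts := by
          intro hv
          obtain ⟨w, hw, -⟩ := hmax.1 hv
          have hGvw : G.Adj v w := M'.adj_sub hw
          have hwv : w ≠ v := hGvw.ne'
          have hmem := hnb ⟨w, hwv⟩ hGvw M hM
          obtain ⟨c, hc, -⟩ := hM.1 hmem
          have h1 : M'.Adj w ↑c := hle.2 (map_incl_adj.2 hc)
          obtain ⟨y, -, huniq⟩ := hmax.1 (M'.edge_vert h1)
          have : (c : V) = v := by rw [huniq _ h1, huniq _ (M'.adj_symm hw)]
          exact c.2 this
        have heq := card_ext_not_mem hM hmax.1 hle hv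
        exact ⟨M', hmax, by rw [heq, ncard_map_incl]⟩
      obtain ⟨M₁', h1', e1⟩ := key M₁ h₁
      obtain ⟨M₂', h2', e2⟩ := key M₂ h₂
      rw [← e1, ← e2, hG _ _ h1' h2']
end

section
/- Every connected vertex-critical equimatchable graph is 2-connected. -/
open SimpleGraph

section Basic
variable {V : Type*} {G : SimpleGraph V}

/-- Two matchings with `M ≤ M'` and `M'.verts ⊆ M.verts` are equal. -/
lemma matching_eq_of_le_s2 {M M' : G.Subgraph} (hM : M.IsMatching) (hM' : M'.IsMatching)
    (hle : M ≤ M') (hv : M'.verts ⊆ M.verts) : M' = M := by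
  have hveq : M'.verts = M.verts := le_antisymm hv hle.1
  ext x y
  · rw [hveq]
  constructor
  · intro hxy
    have hx : x ∈ M.verts := hv (M'.edge_vert hxy)
    obtain ⟨w, hw, hwu⟩ := hM hx
    have : y = w := by
      obtain ⟨w', hw', hwu'⟩ := hM' (M'.edge_vert hxy)
      rw [hwu' y hxy, hwu' w (hle.2 hw)]
    exact this ▸ hw
  · exact fun h => hle.2 h

/-- Local characterization of maximal matchings. -/
lemma isMaximalMatching_iff {M : G.Subgraph} :
    IsMaximalMatching G M ↔ M.IsMatching ∧ ∀ ⦃x y⦄, G.Adj x y → x ∈ M.verts ∨ y ∈ M.verts := by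
  constructor
  · rintro ⟨hM, hmax⟩
    refine ⟨hM, fun x y hxy => ?_⟩
    by_contra hcon
    push_neg at hcon
    obtain ⟨hx, hy⟩ := hcon
    have hd : Disjoint M.support (G.subgraphOfAdj hxy).support := by
      rw [hM.support_eq_verts, (Subgraph.IsMatching.subgraphOfAdj hxy).support_eq_verts,
        subgraphOfAdj_verts]
      rw [Set.disjoint_iff]
      rintro z ⟨hz1, hz2⟩
      rcases hz2 with rfl | rfl
      · exact hx hz1
      · exact hy hz1
    have hsup := hM.sup (Subgraph.IsMatching.subgraphOfAdj hxy) hd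
    have := hmax _ hsup le_sup_left
    apply hx
    have : x ∈ (M ⊔ G.subgraphOfAdj hxy).verts := by
      rw [Subgraph.verts_sup, subgraphOfAdj_verts]
      right; left; rfl
    rwa [hmax _ hsup le_sup_left] at this
  · rintro ⟨hM, hsat⟩
    refine ⟨hM, fun M' hM' hle => ?_⟩
    apply matching_eq_of_le_s2 hM hM' hle
    intro x hx
    obtain ⟨y, hy, _⟩ := hM' hx
    rcases hsat (M'.adj_sub hy) with h | h
    · exact h
    · obtain ⟨z, hz, hzu⟩ := hM h
      obtain ⟨z', hz', hzu'⟩ := hM' (hle.1 (M.edge_vert hz))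
      have h1 : x = z' := hzu' x hy.symm
      have h2 : z = z' := hzu' z (hle.2 hz)
      rw [h1, ← h2]
      exact M.edge_vert hz.symm

end Basic

section B
variable {V : Type*} {G : SimpleGraph V}

/-- `M` is a maximal matching of `G` among matchings with vertices inside `X`. -/
def MaxOn (G : SimpleGraph V) (X : Set V) (M : G.Subgraph) : Prop :=
  M.IsMatching ∧ M.verts ⊆ X ∧
    ∀ ⦃x y⦄, G.Adj x y → x ∈ X → y ∈ X → x ∈ M.verts ∨ y ∈ M.verts

instance [Finite V] : Finite G.Subgraph := by
  classical
  exact Finite.of_injective (fun M => (M.verts, M.Adj))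
    (fun M N h => by
      obtain ⟨h1, h2⟩ := Prod.mk.injEq _ _ _ _ ▸ h
      exact Subgraph.ext h1 h2)

lemma sup_edge_matching {M : G.Subgraph} {x y : V} (hM : M.IsMatching) (hxy : G.Adj x y)
    (hx : x ∉ M.verts) (hy : y ∉ M.verts) : (M ⊔ G.subgraphOfAdj hxy).IsMatching := by
  refine hM.sup (Subgraph.IsMatching.subgraphOfAdj hxy) ?_
  rw [hM.support_eq_verts, (Subgraph.IsMatching.subgraphOfAdj hxy).support_eq_verts,
    subgraphOfAdj_verts, Set.disjoint_iff]
  rintro z ⟨hz1, hz2⟩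
  rcases hz2 with rfl | rfl
  · exact hx hz1
  · exact hy hz1

lemma sup_edge_ncard [Finite V] {M : G.Subgraph} {x y : V} (hxy : G.Adj x y)
    (hx : x ∉ M.verts) :
    (M ⊔ G.subgraphOfAdj hxy).edgeSet.ncard = M.edgeSet.ncard + 1 := by
  rw [Subgraph.edgeSet_sup, edgeSet_subgraphOfAdj]
  rw [Set.union_singleton, Set.ncard_insert_of_notMem ?_ (Set.toFinite _)]
  intro hmem
  exact hx (M.edge_vert (Subgraph.mem_edgeSet.mp hmem))

/-- Every matching with vertices inside `X` extends to a `MaxOn X` matching. -/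
lemma exists_maxOn [Finite V] (X : Set V) {M : G.Subgraph} (hM : M.IsMatching)
    (hMX : M.verts ⊆ X) : ∃ N, MaxOn G X N ∧ M ≤ N := by
  classical
  set S : Set G.Subgraph := {N | N.IsMatching ∧ N.verts ⊆ X ∧ M ≤ N} with hS
  have hfin : S.Finite := Set.toFinite _
  have hne : S.Nonempty := ⟨M, hM, hMX, le_refl M⟩
  obtain ⟨N, hNS, hNmax⟩ := Set.Finite.exists_maximalFor (fun N => N.edgeSet.ncard) S hfin hne
  obtain ⟨hN, hNX, hMN⟩ := hNS
  refine ⟨N, ⟨hN, hNX, ?_⟩, hMN⟩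
  intro x y hxy hxX hyX
  by_contra hcon
  push_neg at hcon
  obtain ⟨hx, hy⟩ := hcon
  set N' := N ⊔ G.subgraphOfAdj hxy with hN'
  have hN'm : N'.IsMatching := sup_edge_matching hN hxy hx hy
  have hN'S : N' ∈ S := by
    refine ⟨hN'm, ?_, le_trans hMN le_sup_left⟩
    rw [hN', Subgraph.verts_sup, subgraphOfAdj_verts]
    rintro z (hz | hz)
    · exact hNX hz
    · rcases hz with rfl | rfl
      · exact hxX
      · exact hyX
  have hcard : N'.edgeSet.ncard = N.edgeSet.ncard + 1 := sup_edge_ncard hxy hx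
  have hle : N.edgeSet.ncard ≤ N'.edgeSet.ncard := by omega
  have : N'.edgeSet.ncard ≤ N.edgeSet.ncard := hNmax (j := N') hN'S hle
  omega

end B

section C
variable {V : Type*} {G : SimpleGraph V}

/-- Restriction of a subgraph to a vertex set. -/
def restrictS (M : G.Subgraph) (X : Set V) : G.Subgraph where
  verts := M.verts ∩ X
  Adj x y := M.Adj x y ∧ x ∈ X ∧ y ∈ X
  adj_sub h := M.adj_sub h.1
  edge_vert h := ⟨M.edge_vert h.1, h.2.1⟩
  symm := ⟨fun x y h => ⟨M.adj_symm h.1, h.2.2, h.2.1⟩⟩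

lemma restrictS_verts (M : G.Subgraph) (X : Set V) : (restrictS M X).verts = M.verts ∩ X := rfl

lemma restrictS_adj {M : G.Subgraph} {X : Set V} {x y : V} :
    (restrictS M X).Adj x y ↔ M.Adj x y ∧ x ∈ X ∧ y ∈ X := Iff.rfl

variable {A B : Set V}

/-- edge sets of subgraphs with disjoint vertex sets are disjoint, cards add. -/
lemma ncard_edgeSet_sup [Finite V] {M N : G.Subgraph} (hd : Disjoint M.verts N.verts) :
    (M ⊔ N).edgeSet.ncard = M.edgeSet.ncard + N.edgeSet.ncard := by
  rw [Subgraph.edgeSet_sup]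
  apply Set.ncard_union_eq ?_ (Set.toFinite _) (Set.toFinite _)
  rw [Set.disjoint_left]
  intro e he hne
  induction e using Sym2.ind with
  | _ x y =>
    rw [Subgraph.mem_edgeSet] at he hne
    exact Set.disjoint_left.mp hd (M.edge_vert he) (N.edge_vert hne)

lemma matching_sup_of_disjoint {M N : G.Subgraph} (hM : M.IsMatching) (hN : N.IsMatching)
    (hd : Disjoint M.verts N.verts) : (M ⊔ N).IsMatching := by
  refine hM.sup hN ?_
  rwa [hM.support_eq_verts, hN.support_eq_verts]

/-- Union of maximal matchings on two separated parts. -/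
lemma maxOn_sup (hAB : Disjoint A B) (hsep : ∀ ⦃x y⦄, x ∈ A → y ∈ B → ¬G.Adj x y)
    {MA MB : G.Subgraph} (hA : MaxOn G A MA) (hB : MaxOn G B MB) :
    MaxOn G (A ∪ B) (MA ⊔ MB) := by
  obtain ⟨hAm, hAv, hAs⟩ := hA
  obtain ⟨hBm, hBv, hBs⟩ := hB
  have hdv : Disjoint MA.verts MB.verts := Set.disjoint_of_subset hAv hBv hAB
  refine ⟨matching_sup_of_disjoint hAm hBm hdv, ?_, ?_⟩
  · rw [Subgraph.verts_sup]
    exact Set.union_subset_union hAv hBv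
  · intro x y hxy hx hy
    rw [Subgraph.verts_sup]
    rcases hx with hx | hx
    · rcases hy with hy | hy
      · rcases hAs hxy hx hy with h | h
        · exact Or.inl (Or.inl h)
        · exact Or.inr (Or.inl h)
      · exact absurd hxy (hsep hx hy)
    · rcases hy with hy | hy
      · exact absurd hxy.symm (hsep hy hx)
      · rcases hBs hxy hx hy with h | h
        · exact Or.inl (Or.inr h)
        · exact Or.inr (Or.inr h)

/-- Splitting a maximal matching on a separated union. -/
lemma maxOn_split (hAB : Disjoint A B) (hsep : ∀ ⦃x y⦄, x ∈ A → y ∈ B → ¬G.Adj x y)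
    {M : G.Subgraph} (hM : MaxOn G (A ∪ B) M) :
    MaxOn G A (restrictS M A) ∧ MaxOn G B (restrictS M B) ∧
      M = restrictS M A ⊔ restrictS M B := by
  obtain ⟨hm, hv, hs⟩ := hM
  -- partner of a vertex in A is in A, in B is in B
  have hpart : ∀ ⦃x y⦄, M.Adj x y → (x ∈ A → y ∈ A) ∧ (x ∈ B → y ∈ B) := by
    intro x y hxy
    have hyv : y ∈ A ∪ B := hv (M.edge_vert hxy.symm)
    constructor
    · intro hxA
      rcases hyv with h | h
      · exact h
      · exact absurd (M.adj_sub hxy) (hsep hxA h)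
    · intro hxB
      rcases hyv with h | h
      · exact absurd (M.adj_sub hxy.symm) (hsep h hxB)
      · exact h
  have hrm : ∀ (X : Set V), (∀ ⦃x y⦄, M.Adj x y → x ∈ X → y ∈ X) →
      (restrictS M X).IsMatching := by
    intro X hX x hx
    obtain ⟨hxv, hxX⟩ := hx
    obtain ⟨y, hy, hyu⟩ := hm hxv
    refine ⟨y, ⟨hy, hxX, hX hy hxX⟩, ?_⟩
    intro z hz
    exact hyu z hz.1
  have hmA : (restrictS M A).IsMatching := hrm A (fun x y h hx => (hpart h).1 hx)
  have hmB : (restrictS M B).IsMatching := hrm B (fun x y h hx => (hpart h).2 hx)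
  refine ⟨⟨hmA, ?_, ?_⟩, ⟨hmB, ?_, ?_⟩, ?_⟩
  · exact Set.inter_subset_right
  · intro x y hxy hx hy
    rcases hs hxy (Or.inl hx) (Or.inl hy) with h | h
    · exact Or.inl ⟨h, hx⟩
    · exact Or.inr ⟨h, hy⟩
  · exact Set.inter_subset_right
  · intro x y hxy hx hy
    rcases hs hxy (Or.inr hx) (Or.inr hy) with h | h
    · exact Or.inl ⟨h, hx⟩
    · exact Or.inr ⟨h, hy⟩
  · ext x y
    · simp only [Subgraph.verts_sup, restrictS_verts]
      constructor
      · intro hx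
        rcases hv hx with h | h
        · exact Or.inl ⟨hx, h⟩
        · exact Or.inr ⟨hx, h⟩
      · rintro (⟨h, _⟩ | ⟨h, _⟩) <;> exact h
    · simp only [Subgraph.sup_adj, restrictS_adj]
      constructor
      · intro hxy
        have hxv : x ∈ A ∪ B := hv (M.edge_vert hxy)
        rcases hxv with h | h
        · exact Or.inl ⟨hxy, h, (hpart hxy).1 h⟩
        · exact Or.inr ⟨hxy, h, (hpart hxy).2 h⟩
      · rintro (⟨h, _⟩ | ⟨h, _⟩) <;> exact h

end C

section D
variable {V : Type*} {G : SimpleGraph V} {s : Set V}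

/-- Push a subgraph of `G.induce s` down to a subgraph of `G`. -/
def downSub (G : SimpleGraph V) (s : Set V) (M : (G.induce s).Subgraph) : G.Subgraph where
  verts := Subtype.val '' M.verts
  Adj x y := ∃ (hx : x ∈ s) (hy : y ∈ s), M.Adj ⟨x, hx⟩ ⟨y, hy⟩
  adj_sub := by
    rintro x y ⟨hx, hy, h⟩
    exact M.adj_sub h
  edge_vert := by
    rintro x y ⟨hx, hy, h⟩
    exact ⟨⟨x, hx⟩, M.edge_vert h, rfl⟩
  symm := by
    refine ⟨?_⟩
    rintro x y ⟨hx, hy, h⟩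
    exact ⟨hy, hx, M.adj_symm h⟩

lemma downSub_verts (M : (G.induce s).Subgraph) :
    (downSub G s M).verts = Subtype.val '' M.verts := rfl

lemma mem_downSub_verts {M : (G.induce s).Subgraph} {x : V} :
    x ∈ (downSub G s M).verts ↔ ∃ hx : x ∈ s, (⟨x, hx⟩ : s) ∈ M.verts := by
  constructor
  · rintro ⟨⟨y, hy⟩, hmem, rfl⟩
    exact ⟨hy, hmem⟩
  · rintro ⟨hx, hmem⟩
    exact ⟨⟨x, hx⟩, hmem, rfl⟩

lemma downSub_verts_subset (M : (G.induce s).Subgraph) : (downSub G s M).verts ⊆ s := by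
  rintro x ⟨⟨y, hy⟩, _, rfl⟩
  exact hy

lemma downSub_matching {M : (G.induce s).Subgraph} (hM : M.IsMatching) :
    (downSub G s M).IsMatching := by
  rintro x hx
  rw [mem_downSub_verts] at hx
  obtain ⟨hxs, hmem⟩ := hx
  obtain ⟨⟨y, hys⟩, hy, hyu⟩ := hM hmem
  refine ⟨y, ⟨hxs, hys, hy⟩, ?_⟩
  rintro z ⟨hxs', hzs, hz⟩
  have : (⟨x, hxs'⟩ : s) = ⟨x, hxs⟩ := rfl
  rw [this] at hz
  have := hyu ⟨z, hzs⟩ hz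
  exact congrArg Subtype.val this

lemma downSub_edgeSet (M : (G.induce s).Subgraph) :
    (downSub G s M).edgeSet = Sym2.map Subtype.val '' M.edgeSet := by
  ext e
  induction e using Sym2.ind with
  | _ x y =>
    simp only [Subgraph.mem_edgeSet, Set.mem_image]
    constructor
    · rintro ⟨hx, hy, h⟩
      exact ⟨s(⟨x, hx⟩, ⟨y, hy⟩), Subgraph.mem_edgeSet.mpr h, rfl⟩
    · rintro ⟨e', he', heq⟩
      induction e' using Sym2.ind with
      | _ a b =>
        rw [Subgraph.mem_edgeSet] at he'
        rw [Sym2.map_pair_eq, Sym2.eq_iff] at heq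
        rcases heq with ⟨h1, h2⟩ | ⟨h1, h2⟩
        · subst h1; subst h2; exact ⟨a.2, b.2, he'⟩
        · subst h1; subst h2; exact ⟨b.2, a.2, he'.symm⟩

lemma downSub_ncard (M : (G.induce s).Subgraph) :
    (downSub G s M).edgeSet.ncard = M.edgeSet.ncard := by
  rw [downSub_edgeSet]
  exact Set.ncard_image_of_injective _ (Sym2.map.injective Subtype.val_injective)

/-- A maximal matching of `G.induce s` pushes down to a `MaxOn s` matching of `G`. -/
lemma downSub_maxOn {M : (G.induce s).Subgraph} (hM : IsMaximalMatching (G.induce s) M) :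
    MaxOn G s (downSub G s M) := by
  rw [isMaximalMatching_iff] at hM
  obtain ⟨hm, hsat⟩ := hM
  refine ⟨downSub_matching hm, downSub_verts_subset M, ?_⟩
  intro x y hxy hx hy
  have hadj : (G.induce s).Adj ⟨x, hx⟩ ⟨y, hy⟩ := hxy
  rcases hsat hadj with h | h
  · exact Or.inl (mem_downSub_verts.mpr ⟨hx, h⟩)
  · exact Or.inr (mem_downSub_verts.mpr ⟨hy, h⟩)

/-- A graph on a subsingleton vertex type is equimatchable. -/
lemma equimatchable_of_subsingleton {W : Type*} [Subsingleton W] (H : SimpleGraph W) :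
    Equimatchable H := by
  have hvert : ∀ (M : H.Subgraph), M.IsMatching → M.edgeSet = ∅ := by
    intro M hM
    rw [Set.eq_empty_iff_forall_notMem]
    intro e he
    induction e using Sym2.ind with
    | _ x y =>
      rw [Subgraph.mem_edgeSet] at he
      exact (M.adj_sub he).ne (Subsingleton.elim x y)
  intro M₁ M₂ h₁ h₂
  rw [hvert M₁ h₁.1, hvert M₂ h₂.1]

end D

section E
variable {V : Type*} {G : SimpleGraph V} [Finite V] {ν : ℕ}

lemma maxOn_univ_isMaximalMatching {M : G.Subgraph} (h : MaxOn G Set.univ M) :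
    IsMaximalMatching G M :=
  isMaximalMatching_iff.mpr ⟨h.1, fun x y hxy => h.2.2 hxy trivial trivial⟩

lemma isMaximalMatching_maxOn_univ {M : G.Subgraph} (h : IsMaximalMatching G M) :
    MaxOn G Set.univ M := by
  rw [isMaximalMatching_iff] at h
  exact ⟨h.1, Set.subset_univ _, fun x y hxy _ _ => h.2 hxy⟩

lemma bot_isMatching : (⊥ : G.Subgraph).IsMatching := by
  intro x hx
  simp only [Subgraph.verts_bot, Set.mem_empty_iff_false] at hx

/-- the common size of maximal matchings bounds all matchings -/
lemma ncard_le_nu (Heq : ∀ M : G.Subgraph, MaxOn G Set.univ M → M.edgeSet.ncard = ν)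
    {M : G.Subgraph} (hM : M.IsMatching) : M.edgeSet.ncard ≤ ν := by
  obtain ⟨N, hN, hle⟩ := exists_maxOn Set.univ hM (Set.subset_univ _)
  rw [← Heq N hN]
  exact Set.ncard_le_ncard (Subgraph.edgeSet_mono hle) (Set.toFinite _)

/-- Step 1: a `MaxOn {u | u ≠ v}` matching has size `ν - 1` or `ν`. -/
lemma maxOn_del_size (Heq : ∀ M : G.Subgraph, MaxOn G Set.univ M → M.edgeSet.ncard = ν)
    {v : V} {M : G.Subgraph} (hM : MaxOn G {u | u ≠ v} M) :
    ν ≤ M.edgeSet.ncard + 1 ∧ M.edgeSet.ncard ≤ ν := by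
  refine ⟨?_, ncard_le_nu Heq hM.1⟩
  obtain ⟨N, hN, hle⟩ := exists_maxOn Set.univ hM.1 (Set.subset_univ _)
  rw [← Heq N hN]
  have hD : ∀ e ∈ N.edgeSet \ M.edgeSet, ∃ w, e = s(v, w) ∧ N.Adj v w := by
    intro e he
    induction e using Sym2.ind with
    | _ x y =>
      obtain ⟨heN, heM⟩ := he
      rw [Subgraph.mem_edgeSet] at heN
      by_cases hxv : x = v
      · exact ⟨y, by rw [hxv], hxv ▸ heN⟩
      by_cases hyv : y = v
      · exact ⟨x, by rw [hyv, Sym2.eq_swap], hyv ▸ heN.symm⟩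
      · exfalso
        apply heM
        rw [Subgraph.mem_edgeSet]
        have hsat := hM.2.2 (N.adj_sub heN) hxv hyv
        rcases hsat with h | h
        · obtain ⟨z, hz, _⟩ := hM.1 h
          obtain ⟨z', hz', hzu'⟩ := hN.1 (hle.1 h)
          have h1 : y = z' := hzu' y heN
          have h2 : z = z' := hzu' z (hle.2 hz)
          rw [h1, ← h2]; exact hz
        · obtain ⟨z, hz, hzu⟩ := hM.1 h
          obtain ⟨z', hz', hzu'⟩ := hN.1 (hle.1 h)
          have h1 : x = z' := hzu' x heN.symm
          have h2 : z = z' := hzu' z (hle.2 hz)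
          exact (h1.trans h2.symm) ▸ hz.symm
  have hsub : N.edgeSet \ M.edgeSet ⊆ {e | ∃ w, e = s(v, w) ∧ N.Adj v w} := hD
  have hss : (N.edgeSet \ M.edgeSet).Subsingleton := by
    intro e he e' he'
    obtain ⟨w, rfl, hw⟩ := hD e he
    obtain ⟨w', rfl, hw'⟩ := hD e' he'
    obtain ⟨z, hz, hzu⟩ := hN.1 (N.edge_vert hw)
    rw [hzu w hw, hzu w' hw']
  have hcard1 : (N.edgeSet \ M.edgeSet).ncard ≤ 1 := by
    rcases Set.Subsingleton.eq_empty_or_singleton hss with h | ⟨e, h⟩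
    · rw [h]; simp
    · rw [h]; simp
  have hunion : N.edgeSet ⊆ M.edgeSet ∪ (N.edgeSet \ M.edgeSet) := by
    intro e he
    by_cases h : e ∈ M.edgeSet
    · exact Or.inl h
    · exact Or.inr ⟨he, h⟩
  calc N.edgeSet.ncard ≤ (M.edgeSet ∪ (N.edgeSet \ M.edgeSet)).ncard :=
        Set.ncard_le_ncard hunion (Set.toFinite _)
    _ ≤ M.edgeSet.ncard + (N.edgeSet \ M.edgeSet).ncard := Set.ncard_union_le _ _
    _ ≤ M.edgeSet.ncard + 1 := by omega

/-- Step 2: a `MaxOn {u | u ≠ v}` matching of full size `ν` saturates all neighbors of `v`. -/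
lemma maxOn_del_sat (Heq : ∀ M : G.Subgraph, MaxOn G Set.univ M → M.edgeSet.ncard = ν)
    {v : V} {M : G.Subgraph} (hM : MaxOn G {u | u ≠ v} M)
    (hcard : M.edgeSet.ncard = ν) {w : V} (hvw : G.Adj v w) : w ∈ M.verts := by
  by_contra hw
  have hv : v ∉ M.verts := fun h => (hM.2.1 h) rfl
  have hm := sup_edge_matching hM.1 hvw hv hw
  have hc := sup_edge_ncard (M := M) hvw hv
  have := ncard_le_nu Heq hm
  omega

end E

section F
variable {V : Type*} {G : SimpleGraph V} [Finite V] {ν : ℕ} {v : V} {A B : Set V}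

/-- connectivity gives a neighbor of `v` in each part of a separation of `G - v`. -/
lemma neighbor_in_part (hconn : G.Connected) (hs : A ∪ B = {u | u ≠ v})
    (hsep : ∀ ⦃x y⦄, x ∈ A → y ∈ B → ¬G.Adj x y) (hA : A.Nonempty) :
    ∃ x ∈ A, G.Adj v x := by
  have hvA : v ∉ A := by
    intro h
    have : v ∈ A ∪ B := Or.inl h
    rw [hs] at this
    exact this rfl
  obtain ⟨a0, ha0⟩ := hA
  have key : ∀ (u u' : V) (_ : G.Walk u u'), u' = v → u ∈ A → ∃ x ∈ A, G.Adj v x := by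
    intro u u' w
    induction w with
    | nil => intro h1 hu; rw [h1] at hu; exact absurd hu hvA
    | @cons u₁ u₂ u₃ h p ih =>
      intro h1 hu
      by_cases hu₂ : u₂ = v
      · refine ⟨u₁, hu, ?_⟩
        rw [← hu₂]
        exact h.symm
      · have : u₂ ∈ A ∪ B := by rw [hs]; exact hu₂
        rcases this with h2 | h2
        · exact ih h1 h2
        · exact absurd h (hsep hu h2)
  exact key a0 v (hconn a0 v).some rfl ha0

/-- The asymmetric core: `MA` maximal on the part `A` containing a neighbor of `v`,
`MB`, `MB'` maximal on `B` of sizes `b` and `b + 1`; contradiction. -/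
lemma core_sub (Heq : ∀ M : G.Subgraph, MaxOn G Set.univ M → M.edgeSet.ncard = ν)
    (hs : A ∪ B = {u | u ≠ v}) (hAB : Disjoint A B)
    (hsep : ∀ ⦃x y⦄, x ∈ A → y ∈ B → ¬G.Adj x y)
    (hnbr : ∃ x ∈ A, G.Adj v x)
    {MA MB MB' : G.Subgraph} (hMA : MaxOn G A MA) (hMB : MaxOn G B MB)
    (hMB' : MaxOn G B MB')
    (hcard : MA.edgeSet.ncard + MB.edgeSet.ncard + 1 = ν)
    (hcard' : MB'.edgeSet.ncard = MB.edgeSet.ncard + 1) : False := by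
  set a := MA.edgeSet.ncard with ha
  set b := MB.edgeSet.ncard with hb
  have hvA : v ∉ A := fun h => by
    have : v ∈ A ∪ B := Set.mem_union_left B h
    rw [hs] at this; exact this rfl
  have hvB : v ∉ B := fun h => by
    have : v ∈ A ∪ B := Set.mem_union_right A h
    rw [hs] at this; exact this rfl
  -- c1: every MaxOn A matching has size a
  have hc1 : ∀ {P : G.Subgraph}, MaxOn G A P → P.edgeSet.ncard = a := by
    intro P hP
    have h1 := maxOn_del_size Heq (v := v)
      (hs ▸ maxOn_sup hAB hsep hP hMB)
    have h2 := maxOn_del_size Heq (v := v)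
      (hs ▸ maxOn_sup hAB hsep hP hMB')
    have hd1 : (P ⊔ MB).edgeSet.ncard = P.edgeSet.ncard + b :=
      ncard_edgeSet_sup (Set.disjoint_of_subset hP.2.1 hMB.2.1 hAB)
    have hd2 : (P ⊔ MB').edgeSet.ncard = P.edgeSet.ncard + (b + 1) := by
      rw [ncard_edgeSet_sup (Set.disjoint_of_subset hP.2.1 hMB'.2.1 hAB), hcard']
    omega
  -- c2: every MaxOn A matching saturates every neighbor of v lying in A
  have hc2 : ∀ {P : G.Subgraph}, MaxOn G A P → ∀ {x}, x ∈ A → G.Adj v x → x ∈ P.verts := by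
    intro P hP x hxA hvx
    have hsup : MaxOn G {u | u ≠ v} (P ⊔ MB') := hs ▸ maxOn_sup hAB hsep hP hMB'
    have hcardsup : (P ⊔ MB').edgeSet.ncard = ν := by
      rw [ncard_edgeSet_sup (Set.disjoint_of_subset hP.2.1 hMB'.2.1 hAB), hc1 hP, hcard']
      omega
    have := maxOn_del_sat Heq hsup hcardsup hvx
    rw [Subgraph.verts_sup] at this
    rcases this with h | h
    · exact h
    · exact absurd hxA (Set.disjoint_right.mp hAB (hMB'.2.1 h))
  obtain ⟨x, hxA, hvx⟩ := hnbr
  -- R : maximal matching on A \ {x}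
  obtain ⟨R, hR, -⟩ := exists_maxOn (G := G) (A \ {x}) bot_isMatching
    (by rw [Subgraph.verts_bot]; exact Set.empty_subset _)
  have hRA : R.verts ⊆ A \ {x} := hR.2.1
  have hxR : x ∉ R.verts := fun h => (hRA h).2 rfl
  -- N := MB ⊔ R ⊔ edge v x
  have hdBR : Disjoint MB.verts R.verts :=
    Set.disjoint_of_subset hMB.2.1 (hRA.trans Set.diff_subset) hAB.symm
  have hm1 : (MB ⊔ R).IsMatching := matching_sup_of_disjoint hMB.1 hR.1 hdBR
  have hv1 : v ∉ (MB ⊔ R).verts := by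
    rw [Subgraph.verts_sup]
    rintro (h | h)
    · exact hvB (hMB.2.1 h)
    · exact hvA (hRA h).1
  have hx1 : x ∉ (MB ⊔ R).verts := by
    rw [Subgraph.verts_sup]
    rintro (h | h)
    · exact Set.disjoint_right.mp hAB (hMB.2.1 h) hxA
    · exact hxR h
  set N := (MB ⊔ R) ⊔ G.subgraphOfAdj hvx with hN
  have hNm : N.IsMatching := sup_edge_matching hm1 hvx hv1 hx1
  have hNmax : MaxOn G Set.univ N := by
    refine ⟨hNm, Set.subset_univ _, ?_⟩
    intro p q hpq _ _
    have hvmem : v ∈ N.verts := by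
      rw [hN, Subgraph.verts_sup, subgraphOfAdj_verts]
      exact Or.inr (Or.inl rfl)
    have hxmem : x ∈ N.verts := by
      rw [hN, Subgraph.verts_sup, subgraphOfAdj_verts]
      exact Or.inr (Or.inr rfl)
    by_cases hpv : p = v
    · exact Or.inl (hpv ▸ hvmem)
    by_cases hqv : q = v
    · exact Or.inr (hqv ▸ hvmem)
    have hp : p ∈ A ∪ B := by rw [hs]; exact hpv
    have hq : q ∈ A ∪ B := by rw [hs]; exact hqv
    have hsub : (MB ⊔ R).verts ⊆ N.verts := by
      rw [hN, Subgraph.verts_sup]; exact Set.subset_union_left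
    rcases hp with hp | hp
    · rcases hq with hq | hq
      · by_cases hpx : p = x
        · exact Or.inl (hpx ▸ hxmem)
        by_cases hqx : q = x
        · exact Or.inr (hqx ▸ hxmem)
        · rcases hR.2.2 hpq ⟨hp, hpx⟩ ⟨hq, hqx⟩ with h | h
          · exact Or.inl (hsub (by rw [Subgraph.verts_sup]; exact Or.inr h))
          · exact Or.inr (hsub (by rw [Subgraph.verts_sup]; exact Or.inr h))
      · exact absurd hpq (hsep hp hq)
    · rcases hq with hq | hq
      · exact absurd hpq.symm (hsep hq hp)
      · rcases hMB.2.2 hpq hp hq with h | h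
        · exact Or.inl (hsub (by rw [Subgraph.verts_sup]; exact Or.inl h))
        · exact Or.inr (hsub (by rw [Subgraph.verts_sup]; exact Or.inl h))
  have hNcard : N.edgeSet.ncard = ν := Heq N hNmax
  have hNcard2 : N.edgeSet.ncard = b + R.edgeSet.ncard + 1 := by
    rw [hN, sup_edge_ncard hvx hv1, ncard_edgeSet_sup hdBR]
  have hRcard : R.edgeSet.ncard = a := by omega
  -- dichotomy
  by_cases hex : ∃ y, G.Adj x y ∧ y ∈ A ∧ y ∉ R.verts
  · obtain ⟨y, hxy, hyA, hyR⟩ := hex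
    have hQm : (R ⊔ G.subgraphOfAdj hxy).IsMatching := sup_edge_matching hR.1 hxy hxR hyR
    have hQv : (R ⊔ G.subgraphOfAdj hxy).verts ⊆ A := by
      rw [Subgraph.verts_sup, subgraphOfAdj_verts]
      rintro z (hz | hz)
      · exact (hRA hz).1
      · rcases hz with rfl | rfl
        · exact hxA
        · exact hyA
    obtain ⟨Q, hQ, hQle⟩ := exists_maxOn A hQm hQv
    have h1 : (R ⊔ G.subgraphOfAdj hxy).edgeSet.ncard = a + 1 := by
      rw [sup_edge_ncard hxy hxR, hRcard]
    have h2 : (R ⊔ G.subgraphOfAdj hxy).edgeSet.ncard ≤ Q.edgeSet.ncard :=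
      Set.ncard_le_ncard (Subgraph.edgeSet_mono hQle) (Set.toFinite _)
    have h3 := hc1 hQ
    omega
  · push_neg at hex
    have hRmaxA : MaxOn G A R := by
      refine ⟨hR.1, hRA.trans Set.diff_subset, ?_⟩
      intro p q hpq hp hq
      by_cases hpx : p = x
      · exact Or.inr (hex q (hpx ▸ hpq) hq)
      by_cases hqx : q = x
      · exact Or.inl (hex p (hqx ▸ hpq.symm) hp)
      · exact hR.2.2 hpq ⟨hp, hpx⟩ ⟨hq, hqx⟩
    exact hxR (hc2 hRmaxA hxA hvx)

end F

section G1
variable {V : Type*} {G : SimpleGraph V} [Finite V] {ν : ℕ} {v : V} {A B : Set V}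

lemma core_equal (Heq : ∀ M : G.Subgraph, MaxOn G Set.univ M → M.edgeSet.ncard = ν)
    (hconn : G.Connected) (hs : A ∪ B = {u | u ≠ v}) (hAB : Disjoint A B)
    (hsep : ∀ ⦃x y⦄, x ∈ A → y ∈ B → ¬G.Adj x y) (hA : A.Nonempty) (hB : B.Nonempty) :
    ∀ M M' : G.Subgraph, MaxOn G {u | u ≠ v} M → MaxOn G {u | u ≠ v} M' →
      M.edgeSet.ncard = M'.edgeSet.ncard := by
  have hsep' : ∀ ⦃x y⦄, x ∈ B → y ∈ A → ¬G.Adj x y :=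
    fun x y hx hy hadj => hsep hy hx hadj.symm
  have hkey : ∀ M M' : G.Subgraph, MaxOn G {u | u ≠ v} M → MaxOn G {u | u ≠ v} M' →
      M.edgeSet.ncard + 1 = ν → M'.edgeSet.ncard = ν → False := by
    intro M M' hM hM' hMc hM'c
    have hM2 : MaxOn G (A ∪ B) M := by rw [hs]; exact hM
    have hM'2 : MaxOn G (A ∪ B) M' := by rw [hs]; exact hM'
    obtain ⟨hMA, hMB, hMsplit⟩ := maxOn_split hAB hsep hM2
    obtain ⟨hM'A, hM'B, hM'split⟩ := maxOn_split hAB hsep hM'2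
    set MA := restrictS M A
    set MB := restrictS M B
    set MA' := restrictS M' A
    set MB' := restrictS M' B
    have hdisj : ∀ {P Q : G.Subgraph}, P.verts ⊆ A → Q.verts ⊆ B → Disjoint P.verts Q.verts :=
      fun hP hQ => Set.disjoint_of_subset hP hQ hAB
    have hsum : M.edgeSet.ncard = MA.edgeSet.ncard + MB.edgeSet.ncard := by
      rw [hMsplit]; exact ncard_edgeSet_sup (hdisj hMA.2.1 hMB.2.1)
    have hsum' : M'.edgeSet.ncard = MA'.edgeSet.ncard + MB'.edgeSet.ncard := by
      rw [hM'split]; exact ncard_edgeSet_sup (hdisj hM'A.2.1 hM'B.2.1)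
    -- mixed matchings
    have hmix1 : MaxOn G {u | u ≠ v} (MA ⊔ MB') := by
      rw [← hs]; exact maxOn_sup hAB hsep hMA hM'B
    have hmix2 : MaxOn G {u | u ≠ v} (MA' ⊔ MB) := by
      rw [← hs]; exact maxOn_sup hAB hsep hM'A hMB
    have hmc1 : (MA ⊔ MB').edgeSet.ncard = MA.edgeSet.ncard + MB'.edgeSet.ncard :=
      ncard_edgeSet_sup (hdisj hMA.2.1 hM'B.2.1)
    have hmc2 : (MA' ⊔ MB).edgeSet.ncard = MA'.edgeSet.ncard + MB.edgeSet.ncard :=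
      ncard_edgeSet_sup (hdisj hM'A.2.1 hMB.2.1)
    have hb1 := maxOn_del_size Heq hmix1
    have hb2 := maxOn_del_size Heq hmix2
    have hcases : (MA'.edgeSet.ncard = MA.edgeSet.ncard ∧
        MB'.edgeSet.ncard = MB.edgeSet.ncard + 1) ∨
        (MB'.edgeSet.ncard = MB.edgeSet.ncard ∧
        MA'.edgeSet.ncard = MA.edgeSet.ncard + 1) := by omega
    rcases hcases with ⟨hA1, hB1⟩ | ⟨hB1, hA1⟩
    · exact core_sub Heq hs hAB hsep (neighbor_in_part hconn hs hsep hA)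
        hMA hMB hM'B (by omega) hB1
    · have hs2 : B ∪ A = {u | u ≠ v} := by rw [Set.union_comm]; exact hs
      exact core_sub Heq hs2 hAB.symm hsep' (neighbor_in_part hconn hs2 hsep' hB)
        hMB hMA hM'A (by omega) hA1
  intro M M' hM hM'
  by_contra hne
  have h1 := maxOn_del_size Heq hM
  have h2 := maxOn_del_size Heq hM'
  have : (M.edgeSet.ncard + 1 = ν ∧ M'.edgeSet.ncard = ν) ∨
      (M'.edgeSet.ncard + 1 = ν ∧ M.edgeSet.ncard = ν) := by omega
  rcases this with ⟨ha, hb⟩ | ⟨ha, hb⟩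
  · exact hkey M M' hM hM' ha hb
  · exact hkey M' M hM' hM ha hb

/-- If `G` is connected, equimatchable, and `G - v` is separated by `(A, B)`,
then `G - v` is equimatchable. -/
lemma del_equimatchable (hGeq : Equimatchable G) (hconn : G.Connected)
    (hs : A ∪ B = {u | u ≠ v}) (hAB : Disjoint A B)
    (hsep : ∀ ⦃x y⦄, x ∈ A → y ∈ B → ¬G.Adj x y) (hA : A.Nonempty) (hB : B.Nonempty) :
    Equimatchable (G.induce {u | u ≠ v}) := by
  obtain ⟨M0, hM0, -⟩ := exists_maxOn (G := G) Set.univ bot_isMatching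
    (by rw [Subgraph.verts_bot]; exact Set.empty_subset _)
  have Heq : ∀ M : G.Subgraph, MaxOn G Set.univ M → M.edgeSet.ncard = M0.edgeSet.ncard :=
    fun M h => hGeq M M0 (maxOn_univ_isMaximalMatching h) (maxOn_univ_isMaximalMatching hM0)
  intro M₁ M₂ h₁ h₂
  rw [← downSub_ncard M₁, ← downSub_ncard M₂]
  exact core_equal Heq hconn hs hAB hsep hA hB _ _ (downSub_maxOn h₁) (downSub_maxOn h₂)

end G1

/-- Every connected vertex-critical equimatchable graph is 2-connected. -/
theorem vce_twoConnected {V : Type*} [Fintype V] (G : SimpleGraph V)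
    (hconn : G.Connected) (hvce : VCE G) : TwoConnected G := by
  classical
  have hne : Nonempty V := hconn.nonempty
  -- at least 3 vertices
  have hcard : 3 ≤ Fintype.card V := by
    by_contra hlt
    push_neg at hlt
    obtain ⟨v⟩ := hne
    have hss : Subsingleton ({u | u ≠ v} : Set V) := by
      constructor
      rintro ⟨x, hx⟩ ⟨y, hy⟩
      have hx' : x ≠ v := hx
      have hy' : y ≠ v := hy
      ext
      by_contra hxy
      have h1 : ({x, y, v} : Finset V).card = 3 := by
        rw [Finset.card_insert_of_notMem (by simp [hxy, hx']),
          Finset.card_insert_of_notMem (by simp [hy']), Finset.card_singleton]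
      have h2 : ({x, y, v} : Finset V).card ≤ Fintype.card V := by
        rw [← Finset.card_univ]
        exact Finset.card_le_card (Finset.subset_univ _)
      omega
    exact hvce.2 v (@equimatchable_of_subsingleton _ hss _)
  refine ⟨hcard, hconn, fun v => ?_⟩
  by_contra hnc
  -- the vertex set of G - v is nonempty
  have hsne : Nonempty ({u | u ≠ v} : Set V) := by
    obtain ⟨w, hw⟩ := Fintype.exists_ne_of_one_lt_card (by omega) v
    exact ⟨⟨w, hw⟩⟩
  have hnp : ¬ (G.induce {u | u ≠ v}).Preconnected := by
    intro hp
    exact hnc ⟨hp⟩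
  rw [SimpleGraph.Preconnected] at hnp
  push_neg at hnp
  obtain ⟨a, b, hab⟩ := hnp
  set H := G.induce {u | u ≠ v} with hH
  set A : Set V := Subtype.val '' {y : ({u | u ≠ v} : Set V) | H.Reachable a y} with hA
  set B : Set V := Subtype.val '' {y : ({u | u ≠ v} : Set V) | ¬ H.Reachable a y} with hB
  have hsub : A ∪ B = {u | u ≠ v} := by
    ext x
    constructor
    · rintro (⟨⟨y, hy⟩, _, rfl⟩ | ⟨⟨y, hy⟩, _, rfl⟩) <;> exact hy
    · intro hx
      by_cases hr : H.Reachable a ⟨x, hx⟩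
      · exact Or.inl ⟨⟨x, hx⟩, hr, rfl⟩
      · exact Or.inr ⟨⟨x, hx⟩, hr, rfl⟩
  have hAB : Disjoint A B := by
    rw [Set.disjoint_left]
    rintro x ⟨⟨y, hy⟩, hr, rfl⟩ ⟨⟨z, hz⟩, hnr, heq⟩
    have : (⟨y, hy⟩ : ({u | u ≠ v} : Set V)) = ⟨z, hz⟩ := Subtype.ext heq.symm
    rw [this] at hr
    exact hnr hr
  have hsep : ∀ ⦃x y⦄, x ∈ A → y ∈ B → ¬G.Adj x y := by
    rintro x y ⟨⟨x', hx'⟩, hr, rfl⟩ ⟨⟨y', hy'⟩, hnr, rfl⟩ hadj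
    have hadj' : H.Adj ⟨x', hx'⟩ ⟨y', hy'⟩ := hadj
    exact hnr (hr.trans hadj'.reachable)
  have hAne : A.Nonempty := ⟨a.val, a, Reachable.refl a, rfl⟩
  have hBne : B.Nonempty := ⟨b.val, b, hab, rfl⟩
  exact hvce.2 v (del_equimatchable hvce.1 hconn hsub hAB hsep hAne hBne)
end

section
/- No connected bipartite graph is vertex-critical equimatchable. -/
open SimpleGraph

open Subgraph

section Aux

variable {V : Type*} {G : SimpleGraph V}

private lemma matching_eq_of_le_s3 [Finite V] {M N : G.Subgraph} (hM : M.IsMatching)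
    (hN : N.IsMatching) (hle : M ≤ N) (hcard : N.edgeSet.ncard ≤ M.edgeSet.ncard) : N = M := by
  have hedge : M.edgeSet = N.edgeSet :=
    Set.eq_of_subset_of_ncard_le (Subgraph.edgeSet_mono hle) hcard (Set.toFinite _)
  have hadj : N.Adj = M.Adj := by
    ext a b
    rw [← Subgraph.mem_edgeSet, ← Subgraph.mem_edgeSet, ← hedge]
  ext a b
  · rw [← hN.support_eq_verts, ← hM.support_eq_verts, Subgraph.mem_support,
      Subgraph.mem_support, hadj]
  · rw [hadj]

private lemma matching_sup_edge [Finite V] {M : G.Subgraph} (hM : M.IsMatching) {u w : V}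
    (hu : u ∉ M.verts) (hw : w ∉ M.verts) (huw : G.Adj u w) :
    (M ⊔ G.subgraphOfAdj huw).IsMatching ∧
      (M ⊔ G.subgraphOfAdj huw).edgeSet.ncard = M.edgeSet.ncard + 1 := by
  have hdisj : Disjoint M.support (G.subgraphOfAdj huw).support := by
    refine Set.disjoint_left.mpr fun a ha ha' => ?_
    have h1 : a ∈ M.verts := M.support_subset_verts ha
    have h2 : a ∈ ({u, w} : Set V) := by
      simpa using (G.subgraphOfAdj huw).support_subset_verts ha'
    rcases h2 with rfl | rfl
    · exact hu h1
    · exact hw h1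
  refine ⟨hM.sup (IsMatching.subgraphOfAdj huw) hdisj, ?_⟩
  rw [Subgraph.edgeSet_sup, SimpleGraph.edgeSet_subgraphOfAdj, Set.union_singleton]
  exact Set.ncard_insert_of_notMem (fun h => hu (M.edge_vert (Subgraph.mem_edgeSet.mp h)))
    (Set.toFinite _)

private lemma exists_maximal [Finite V] (P : G.Subgraph) (hP : P.IsMatching) :
    ∃ Z : G.Subgraph, IsMaximalMatching G Z ∧ P ≤ Z := by
  set S : Set ℕ := {n | ∃ Q : G.Subgraph, Q.IsMatching ∧ P ≤ Q ∧ Q.edgeSet.ncard = n} with hS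
  have hne : S.Nonempty := ⟨_, P, hP, le_refl _, rfl⟩
  have hbdd : BddAbove S := by
    refine ⟨(Set.univ : Set (Sym2 V)).ncard, fun n hn => ?_⟩
    obtain ⟨Q, _, _, rfl⟩ := hn
    exact Set.ncard_le_ncard (Set.subset_univ _) (Set.toFinite _)
  obtain ⟨Q, hQ, hPQ, hQn⟩ := Nat.sSup_mem hne hbdd
  refine ⟨Q, ⟨hQ, fun Z hZ hle => ?_⟩, hPQ⟩
  have hmem : Z.edgeSet.ncard ∈ S := ⟨Z, hZ, hPQ.trans hle, rfl⟩
  exact matching_eq_of_le_s3 hQ hZ hle (hQn ▸ le_csSup hbdd hmem)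

private lemma maximal_of_ncard [Finite V] (hEq : Equimatchable G) {M P : G.Subgraph}
    (hM : IsMaximalMatching G M) (hP : P.IsMatching) (hc : P.edgeSet.ncard = M.edgeSet.ncard) :
    IsMaximalMatching G P := by
  refine ⟨hP, fun Z hZ hle => ?_⟩
  obtain ⟨Z', hZ', hle'⟩ := exists_maximal Z hZ
  have h1 : Z.edgeSet.ncard ≤ Z'.edgeSet.ncard :=
    Set.ncard_le_ncard (Subgraph.edgeSet_mono hle') (Set.toFinite _)
  have h2 : Z'.edgeSet.ncard = M.edgeSet.ncard := hEq Z' M hZ' hM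
  exact matching_eq_of_le_s3 hP hZ hle (by omega)

private lemma matching_deleteVerts {N : G.Subgraph} (hN : N.IsMatching) {x y : V}
    (hxy : N.Adj x y) :
    (N.deleteVerts {x, y}).IsMatching ∧
      (N.deleteVerts {x, y}).edgeSet = N.edgeSet \ {s(x, y)} := by
  have hyx : N.Adj y x := N.adj_symm hxy
  have hxv : x ∈ N.verts := N.edge_vert hxy
  have hyv : y ∈ N.verts := N.edge_vert hyx
  have hmate_x : ∀ z, N.Adj x z → z = y := fun z hz => by
    obtain ⟨t, _, ht⟩ := hN hxv
    rw [ht z hz, ht y hxy]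
  have hmate_y : ∀ z, N.Adj y z → z = x := fun z hz => by
    obtain ⟨t, _, ht⟩ := hN hyv
    rw [ht z hz, ht x hyx]
  constructor
  · intro v hv
    rw [Subgraph.deleteVerts_verts] at hv
    obtain ⟨hv1, hv2⟩ := hv
    obtain ⟨z, hz, hzuniq⟩ := hN hv1
    have hznot : z ∉ ({x, y} : Set V) := by
      rintro (rfl | rfl)
      · exact hv2 (by simp [hmate_x v (N.adj_symm hz)])
      · exact hv2 (by simp [hmate_y v (N.adj_symm hz)])
    refine ⟨z, ?_, fun t ht => ?_⟩
    · show (N.deleteVerts {x, y}).Adj v z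
      rw [Subgraph.deleteVerts_adj]
      exact ⟨hv1, hv2, N.edge_vert (N.adj_symm hz), hznot, hz⟩
    · exact hzuniq t ((Subgraph.deleteVerts_adj.mp ht).2.2.2.2)
  · ext e
    induction e with
    | _ a b =>
      simp only [Subgraph.mem_edgeSet, Subgraph.deleteVerts_adj, Set.mem_diff,
        Set.mem_singleton_iff, Set.mem_insert_iff]
      constructor
      · rintro ⟨ha1, ha2, hb1, hb2, hab⟩
        refine ⟨hab, fun h => ?_⟩
        rcases Sym2.eq_iff.mp h with ⟨rfl, rfl⟩ | ⟨rfl, rfl⟩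
        · exact ha2 (Or.inl rfl)
        · exact ha2 (Or.inr rfl)
      · rintro ⟨hab, hne⟩
        refine ⟨N.edge_vert hab, ?_, N.edge_vert (N.adj_symm hab), ?_, hab⟩
        · rintro (rfl | rfl)
          · exact hne (by rw [hmate_x b hab])
          · exact hne (by rw [hmate_y b hab, Sym2.eq_swap])
        · rintro (rfl | rfl)
          · exact hne (by rw [hmate_x a (N.adj_symm hab), Sym2.eq_swap])
          · exact hne (by rw [hmate_y a (N.adj_symm hab)])

private lemma surgery [Finite V] {P : G.Subgraph} (hP : P.IsMatching) {a b c : V} (hab : P.Adj a b)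
    (hc : c ∉ P.verts) (hbc : G.Adj b c) :
    ∃ Q : G.Subgraph, Q.IsMatching ∧ Q.edgeSet = insert s(b, c) (P.edgeSet \ {s(a, b)}) ∧
      Q.verts = (P.verts \ {a, b}) ∪ {b, c} ∧ Q.edgeSet.ncard = P.edgeSet.ncard := by
  obtain ⟨hdel, hdele⟩ := matching_deleteVerts hP hab
  have hdisj : Disjoint (P.deleteVerts {a, b}).support (G.subgraphOfAdj hbc).support := by
    refine Set.disjoint_left.mpr fun z hz hz' => ?_
    have h1 := (P.deleteVerts {a, b}).support_subset_verts hz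
    rw [Subgraph.deleteVerts_verts] at h1
    have h2 : z ∈ ({b, c} : Set V) := by
      simpa using (G.subgraphOfAdj hbc).support_subset_verts hz'
    rcases h2 with rfl | rfl
    · exact h1.2 (Or.inr rfl)
    · exact hc h1.1
  refine ⟨P.deleteVerts {a, b} ⊔ G.subgraphOfAdj hbc, hdel.sup (IsMatching.subgraphOfAdj hbc)
    hdisj, ?_, ?_, ?_⟩
  · rw [Subgraph.edgeSet_sup, hdele, SimpleGraph.edgeSet_subgraphOfAdj, Set.union_singleton]
  · rw [Subgraph.verts_sup, Subgraph.deleteVerts_verts, SimpleGraph.subgraphOfAdj_verts]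
  · rw [Subgraph.edgeSet_sup, hdele, SimpleGraph.edgeSet_subgraphOfAdj, Set.union_singleton]
    rw [Set.ncard_insert_of_notMem (fun h => hc (P.mem_verts_of_mem_edge h.1 (by simp)))
      (Set.toFinite _)]
    have := Set.ncard_diff_singleton_add_one (show s(a,b) ∈ P.edgeSet from hab) (Set.toFinite _)
    omega

end Aux

section Shift

variable {V : Type*} {G : SimpleGraph V}

private lemma shift [Finite V] (hEq : Equimatchable G) {s : Set V}
    (hs : ∀ a b : V, G.Adj a b → (a ∈ s ↔ b ∉ s)) {M : G.Subgraph}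
    (hM : IsMaximalMatching G M) (n : ℕ) :
    ∀ N : G.Subgraph, IsMaximalMatching G N → ∀ w : V, w ∉ s → w ∉ N.verts →
      (symmDiff M.edgeSet N.edgeSet).ncard ≤ n →
      ∃ M' : G.Subgraph, M'.IsMatching ∧ M'.edgeSet.ncard = M.edgeSet.ncard ∧
        w ∉ M'.verts ∧ M'.verts ⊆ M.verts ∪ sᶜ ∧ M'.edgeSet ⊆ M.edgeSet ∪ N.edgeSet := by
  induction n with
  | zero =>
    intro N hN w hws hwN hcard
    by_cases hwM : w ∈ M.verts
    · obtain ⟨x, hwx, hxuniq⟩ := hM.1 hwM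
      have hwxM : s(w, x) ∈ M.edgeSet := hwx
      have hwxN : s(w, x) ∉ N.edgeSet := fun h => hwN (N.edge_vert (Subgraph.mem_edgeSet.mp h))
      have hmem : s(w, x) ∈ symmDiff M.edgeSet N.edgeSet := Set.mem_symmDiff.mpr (Or.inl ⟨hwxM, hwxN⟩)
      have := (Set.ncard_pos (Set.toFinite _)).mpr ⟨_, hmem⟩
      omega
    · exact ⟨M, hM.1, rfl, hwM, Set.subset_union_left, fun e he => Or.inl he⟩
  | succ n ih =>
    intro N hN w hws hwN hcard
    by_cases hwM : w ∈ M.verts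
    · obtain ⟨x, hwx, hxuniq⟩ := hM.1 hwM
      have hGwx : G.Adj w x := M.adj_sub hwx
      have hxs : x ∈ s := by have := hs w x hGwx; tauto
      by_cases hxN : x ∈ N.verts
      · obtain ⟨y, hxy, hyuniq⟩ := hN.1 hxN
        have hyw : y ≠ w := by rintro rfl; exact hwN (N.edge_vert (N.adj_symm hxy))
        have hys : y ∉ s := (hs x y (N.adj_sub hxy)).mp hxs
        have hGxy : G.Adj x y := N.adj_sub hxy
        obtain ⟨N₁, hN₁m, hN₁e, hN₁v, hN₁c⟩ := surgery hN.1 (N.adj_symm hxy) hwN hGwx.symm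
        rw [show s(x, w) = s(w, x) from Sym2.eq_swap,
          show s(y, x) = s(x, y) from Sym2.eq_swap] at hN₁e
        have hwxM : s(w, x) ∈ M.edgeSet := hwx
        have hwxN : s(w, x) ∉ N.edgeSet := fun h => hwN (N.edge_vert (Subgraph.mem_edgeSet.mp h))
        have hxyN : s(x, y) ∈ N.edgeSet := hxy
        have hxyM : s(x, y) ∉ M.edgeSet := by
          intro h
          obtain ⟨t, _, htu⟩ := hM.1 (M.edge_vert (M.adj_symm hwx))
          exact hyw ((htu y (Subgraph.mem_edgeSet.mp h)).trans (htu w (M.adj_symm hwx)).symm)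
        have hNM : N.edgeSet.ncard = M.edgeSet.ncard := hEq N M hN hM
        have hN₁max : IsMaximalMatching G N₁ :=
          maximal_of_ncard hEq hM hN₁m (by rw [hN₁c, hNM])
        have hyN₁ : y ∉ N₁.verts := by
          rw [hN₁v]
          rintro (⟨-, h⟩ | h)
          · exact h (Or.inl rfl)
          · rcases h with rfl | rfl
            · exact hGxy.ne rfl
            · exact hyw rfl
        have hsub : (symmDiff M.edgeSet N₁.edgeSet) ⊆ (symmDiff M.edgeSet N.edgeSet) \ {s(w, x)} := by
          intro e he
          rw [Set.mem_symmDiff] at he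
          rw [Set.mem_diff, Set.mem_symmDiff, Set.mem_singleton_iff]
          rcases he with ⟨heM, heN₁⟩ | ⟨heN₁, heM⟩
          · have hne : e ≠ s(w, x) := fun h => heN₁ (by rw [hN₁e, h]; exact Set.mem_insert _ _)
            refine ⟨Or.inl ⟨heM, fun heN => heN₁ ?_⟩, hne⟩
            rw [hN₁e]
            exact Set.mem_insert_of_mem _ ⟨heN, fun h => hxyM (Set.mem_singleton_iff.mp h ▸ heM)⟩
          · have hne : e ≠ s(w, x) := fun h => heM (h ▸ hwxM)
            rw [hN₁e] at heN₁
            rcases Set.mem_insert_iff.mp heN₁ with rfl | ⟨heN, -⟩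
            · exact (hne rfl).elim
            · exact ⟨Or.inr ⟨heN, heM⟩, hne⟩
        have hmem : s(w, x) ∈ symmDiff M.edgeSet N.edgeSet := Set.mem_symmDiff.mpr (Or.inl ⟨hwxM, hwxN⟩)
        have h1 := Set.ncard_diff_singleton_add_one hmem (Set.toFinite _)
        have h2 := Set.ncard_le_ncard hsub (Set.toFinite _)
        obtain ⟨M'', hm, hcard'', hyM'', hvsub'', hesub''⟩ :=
          ih N₁ hN₁max y hys hyN₁ (by omega)
        by_cases hwM'' : w ∈ M''.verts
        · obtain ⟨x', hwx', -⟩ := hm hwM''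
          have hx'x : x' = x := by
            rcases hesub'' (Subgraph.mem_edgeSet.mpr hwx') with h | h
            · exact hxuniq x' (Subgraph.mem_edgeSet.mp h)
            · rw [hN₁e] at h
              rcases Set.mem_insert_iff.mp h with h | ⟨h, -⟩
              · rcases Sym2.eq_iff.mp h with ⟨-, h2⟩ | ⟨h1, -⟩
                · exact h2
                · exact absurd h1 hGwx.ne
              · exact absurd (N.edge_vert (Subgraph.mem_edgeSet.mp h)) hwN
          subst hx'x
          obtain ⟨Q, hQm, hQe, hQv, hQc⟩ := surgery hm hwx' hyM'' hGxy
          refine ⟨Q, hQm, by rw [hQc, hcard''], ?_, ?_, ?_⟩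
          · rw [hQv]
            rintro (⟨-, h⟩ | h)
            · exact h (Or.inl rfl)
            · rcases h with rfl | rfl
              · exact hGwx.ne rfl
              · exact hyw rfl
          · rw [hQv]
            rintro z (⟨hz, -⟩ | hz)
            · exact hvsub'' hz
            · rcases hz with rfl | rfl
              · exact Or.inl (M.edge_vert (M.adj_symm hwx))
              · exact Or.inr hys
          · rw [hQe]
            rintro e he
            rcases Set.mem_insert_iff.mp he with rfl | ⟨he, hne⟩
            · exact Or.inr hxyN
            · rcases hesub'' he with h | h
              · exact Or.inl h
              · rw [hN₁e] at h
                rcases Set.mem_insert_iff.mp h with h | ⟨h, -⟩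
                · exact absurd h hne
                · exact Or.inr h
        · refine ⟨M'', hm, hcard'', hwM'', hvsub'', fun e he => ?_⟩
          rcases hesub'' he with h | h
          · exact Or.inl h
          · rw [hN₁e] at h
            rcases Set.mem_insert_iff.mp h with rfl | ⟨h, -⟩
            · exact Or.inl hwxM
            · exact Or.inr h
      · obtain ⟨hm1, -⟩ := matching_sup_edge hN.1 hwN hxN hGwx
        have heq := hN.2 _ hm1 le_sup_left
        refine absurd ?_ hwN
        have hmem : w ∈ (N ⊔ G.subgraphOfAdj hGwx).verts := Or.inr (by simp)
        rwa [heq] at hmem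
    · exact ⟨M, hM.1, rfl, hwM, Set.subset_union_left, fun e he => Or.inl he⟩

end Shift

section Main

variable {V : Type*} {G : SimpleGraph V}

private lemma no_both [Finite V] (hEq : Equimatchable G) {s : Set V}
    (hs : ∀ a b : V, G.Adj a b → (a ∈ s ↔ b ∉ s)) {u w : V} (huw : G.Adj u w) (hu : u ∈ s)
    {M N : G.Subgraph} (hM : IsMaximalMatching G M) (hMu : u ∉ M.verts)
    (hN : IsMaximalMatching G N) (hNw : w ∉ N.verts) : False := by
  have hw : w ∉ s := (hs u w huw).mp hu
  obtain ⟨M', hm, hcard, hwM', hvsub, -⟩ :=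
    shift hEq hs hM (symmDiff M.edgeSet N.edgeSet).ncard N hN w hw hNw le_rfl
  have huM' : u ∉ M'.verts := by
    intro h
    rcases hvsub h with h' | h'
    · exact hMu h'
    · exact h' hu
  obtain ⟨hYm, hYc⟩ := matching_sup_edge hm huM' hwM' huw
  obtain ⟨Z, hZ, hle⟩ := exists_maximal _ hYm
  have h1 : (M' ⊔ G.subgraphOfAdj huw).edgeSet.ncard ≤ Z.edgeSet.ncard :=
    Set.ncard_le_ncard (Subgraph.edgeSet_mono hle) (Set.toFinite _)
  have h2 : Z.edgeSet.ncard = M.edgeSet.ncard := hEq Z M hZ hM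
  omega

private lemma equimatchable_of_essential [Finite V] (hEq : Equimatchable G) {v : V}
    (hess : ∀ Z : G.Subgraph, IsMaximalMatching G Z → v ∈ Z.verts) :
    Equimatchable (G.induce {u | u ≠ v}) := by
  set s : Set V := {u | u ≠ v} with hsdef
  set f : G.induce s ↪g G := SimpleGraph.Embedding.induce s with hfdef
  have hfinj : Function.Injective f := f.injective
  have hcoe : ∀ z : s, (f.toHom z : V) = z.1 := fun z => rfl
  have key : ∀ M : (G.induce s).Subgraph, IsMaximalMatching (G.induce s) M →
      ∃ Z : G.Subgraph, IsMaximalMatching G Z ∧ Z.edgeSet.ncard = M.edgeSet.ncard + 1 := by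
    intro M hM
    set F : G.Subgraph := M.map f.toHom with hF
    have hFm : F.IsMatching := hM.1.map f.toHom hfinj
    have hvF : v ∉ F.verts := by
      rw [hF]
      rintro ⟨⟨a, ha⟩, -, h⟩
      rw [hcoe] at h
      exact ha h
    have hFe : F.edgeSet.ncard = M.edgeSet.ncard := by
      have himg : F.edgeSet = Sym2.map f '' M.edgeSet := by
        ext e
        induction e with
        | _ a b =>
          simp only [hF, Subgraph.mem_edgeSet, Subgraph.map_adj, Relation.Map, Set.mem_image]
          constructor
          · rintro ⟨c, d, h, rfl, rfl⟩
            exact ⟨s(c, d), h, rfl⟩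
          · rintro ⟨e', he', hmap⟩
            induction e' with
            | _ c d =>
              rw [Sym2.map_pair_eq] at hmap
              rcases Sym2.eq_iff.mp hmap with ⟨h1, h2⟩ | ⟨h1, h2⟩
              · exact ⟨c, d, he', h1, h2⟩
              · exact ⟨d, c, M.adj_symm he', h2, h1⟩
      rw [himg, Set.ncard_image_of_injective _ (Sym2.map.injective hfinj)]
    obtain ⟨Z, hZ, hle⟩ := exists_maximal F hFm
    have hvZ : v ∈ Z.verts := hess Z hZ
    obtain ⟨c, hvc, hcuniq⟩ := hZ.1 hvZ
    have hZe : Z.edgeSet = insert s(v, c) F.edgeSet := by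
      apply Set.Subset.antisymm
      · intro e he
        induction e with
        | _ a b =>
          have hab : Z.Adj a b := he
          rcases eq_or_ne a v with rfl | hav
          · rw [hcuniq b hab]
            exact Set.mem_insert _ _
          rcases eq_or_ne b v with rfl | hbv
          · rw [hcuniq a (Z.adj_symm hab), Sym2.eq_swap]
            exact Set.mem_insert _ _
          by_cases haF : a ∈ F.verts
          · obtain ⟨b', hab', -⟩ := hFm haF
            obtain ⟨t, -, htu⟩ := hZ.1 (Z.edge_vert hab)
            have hbb : b = b' := by rw [htu b hab, htu b' (hle.2 hab')]
            subst hbb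
            exact Set.mem_insert_of_mem _ hab'
          by_cases hbF : b ∈ F.verts
          · obtain ⟨a', hba', -⟩ := hFm hbF
            obtain ⟨t, -, htu⟩ := hZ.1 (Z.edge_vert (Z.adj_symm hab))
            have haa : a = a' := by rw [htu a (Z.adj_symm hab), htu a' (hle.2 hba')]
            subst haa
            exact Set.mem_insert_of_mem _ (Subgraph.mem_edgeSet.mpr (F.adj_symm hba'))
          · exfalso
            have haM : (⟨a, hav⟩ : s) ∉ M.verts := fun h => haF ⟨_, h, rfl⟩
            have hbM : (⟨b, hbv⟩ : s) ∉ M.verts := fun h => hbF ⟨_, h, rfl⟩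
            have hadj' : (G.induce s).Adj ⟨a, hav⟩ ⟨b, hbv⟩ := Z.adj_sub hab
            obtain ⟨hm1, -⟩ := matching_sup_edge hM.1 haM hbM hadj'
            have heq := hM.2 _ hm1 le_sup_left
            apply haM
            have hmem : (⟨a, hav⟩ : s) ∈ (M ⊔ (G.induce s).subgraphOfAdj hadj').verts :=
              Or.inr (by simp)
            rwa [heq] at hmem
      · rw [Set.insert_subset_iff]
        exact ⟨hvc, Subgraph.edgeSet_mono hle⟩
    refine ⟨Z, hZ, ?_⟩
    rw [hZe, Set.ncard_insert_of_notMem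
      (fun h => hvF (F.mem_verts_of_mem_edge h (by simp))) (Set.toFinite _), hFe]
  intro M₁ M₂ h₁ h₂
  obtain ⟨Z₁, hZ₁, hc₁⟩ := key M₁ h₁
  obtain ⟨Z₂, hZ₂, hc₂⟩ := key M₂ h₂
  have := hEq Z₁ Z₂ hZ₁ hZ₂
  omega

end Main

/-- No connected bipartite graph is vertex-critical equimatchable. -/
theorem bipartite_not_vce {V : Type*} [Fintype V] (G : SimpleGraph V)
    (hconn : G.Connected) (hbip : IsBipartiteGraph G) : ¬ VCE G := by
  rintro ⟨hEq, hdel⟩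
  obtain ⟨s, hs⟩ := hbip
  have hiness : ∀ v : V, ∃ M : G.Subgraph, IsMaximalMatching G M ∧ v ∉ M.verts := by
    intro v
    by_contra h
    push_neg at h
    exact hdel v (equimatchable_of_essential hEq h)
  by_cases hedge : ∃ u w : V, G.Adj u w
  · obtain ⟨u, w, huw⟩ := hedge
    obtain ⟨Mu, hMu, hvu⟩ := hiness u
    obtain ⟨Nw, hNw, hvw⟩ := hiness w
    by_cases hus : u ∈ s
    · exact no_both hEq hs huw hus hMu hvu hNw hvw
    · have hws : w ∈ s := by have := hs u w huw; tauto
      exact no_both hEq hs huw.symm hws hNw hvw hMu hvu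
  · have v : V := hconn.nonempty.some
    apply hdel v
    intro M₁ M₂ _ _
    have hempty : ∀ M : (G.induce {u | u ≠ v}).Subgraph, M.edgeSet = ∅ := by
      intro M
      ext e
      induction e with
      | _ a b =>
        simp only [Subgraph.mem_edgeSet, Set.mem_empty_iff_false, iff_false]
        intro h
        exact hedge ⟨a.1, b.1, M.adj_sub h⟩
    rw [hempty M₁, hempty M₂]
end

section
/- Let G be a connected equimatchable graph with at least 3 vertices and let uv be an edge of G. Then the graph G − uv obtained by deleting the edge uv is not equimatchable if and only if there exists a matching of G that contains the edge uv and saturates every vertex of N(u) ∪ N(v). -/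
open SimpleGraph

namespace CritAux


variable {V : Type*} {G : SimpleGraph V}

/-- Add an edge `ab` to a subgraph. -/
def addE (M : G.Subgraph) (a b : V) (hab : G.Adj a b) : G.Subgraph where
  verts := M.verts ∪ {a, b}
  Adj x y := M.Adj x y ∨ (x = a ∧ y = b) ∨ (x = b ∧ y = a)
  adj_sub := by
    rintro x y (h | ⟨rfl, rfl⟩ | ⟨rfl, rfl⟩)
    · exact M.adj_sub h
    · exact hab
    · exact hab.symm
  edge_vert := by
    rintro x y (h | ⟨rfl, rfl⟩ | ⟨rfl, rfl⟩)
    · exact Or.inl (M.edge_vert h)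
    · exact Or.inr (by simp)
    · exact Or.inr (by simp)
  symm := by
    refine ⟨?_⟩
    rintro x y (h | ⟨rfl, rfl⟩ | ⟨rfl, rfl⟩)
    · exact Or.inl h.symm
    · exact Or.inr (Or.inr ⟨rfl, rfl⟩)
    · exact Or.inr (Or.inl ⟨rfl, rfl⟩)

lemma le_addE (M : G.Subgraph) (a b : V) (hab : G.Adj a b) : M ≤ addE M a b hab :=
  ⟨Set.subset_union_left, fun _ _ h => Or.inl h⟩

lemma addE_matching {M : G.Subgraph} (hM : M.IsMatching) {a b : V} (hab : G.Adj a b)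
    (ha : a ∉ M.verts) (hb : b ∉ M.verts) : (addE M a b hab).IsMatching := by
  rintro x (hx | hx)
  · obtain ⟨y, hy, hy'⟩ := hM hx
    refine ⟨y, Or.inl hy, ?_⟩
    rintro z (hz | ⟨rfl, rfl⟩ | ⟨rfl, rfl⟩)
    · exact hy' z hz
    · exact absurd hx ha
    · exact absurd hx hb
  · rcases hx with rfl | rfl
    · refine ⟨b, Or.inr (Or.inl ⟨rfl, rfl⟩), ?_⟩
      rintro z (hz | ⟨-, rfl⟩ | ⟨h, rfl⟩)
      · exact absurd (M.edge_vert hz) ha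
      · rfl
      · exact absurd h hab.ne
    · refine ⟨a, Or.inr (Or.inr ⟨rfl, rfl⟩), ?_⟩
      rintro z (hz | ⟨h, rfl⟩ | ⟨-, rfl⟩)
      · exact absurd (M.edge_vert hz) hb
      · exact absurd h.symm hab.ne
      · rfl

lemma addE_edgeSet (M : G.Subgraph) (a b : V) (hab : G.Adj a b) :
    (addE M a b hab).edgeSet = insert s(a, b) M.edgeSet := by
  ext e
  induction e using Sym2.ind with
  | _ x y =>
    simp only [SimpleGraph.Subgraph.mem_edgeSet, Set.mem_insert_iff, Sym2.eq_iff]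
    show M.Adj x y ∨ _ ∨ _ ↔ _
    tauto

/-- Characterization of maximal matchings via saturation. -/
lemma maximal_iff (M : G.Subgraph) :
    IsMaximalMatching G M ↔
      M.IsMatching ∧ ∀ a b, G.Adj a b → a ∈ M.verts ∨ b ∈ M.verts := by
  constructor
  · rintro ⟨hm, hmax⟩
    refine ⟨hm, fun a b hab => ?_⟩
    by_contra h
    push_neg at h
    obtain ⟨ha, hb⟩ := h
    have heq := hmax (addE M a b hab) (addE_matching hm hab ha hb) (le_addE M a b hab)
    have : a ∈ (addE M a b hab).verts := Or.inr (by simp)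
    rw [heq] at this
    exact ha this
  · rintro ⟨hm, hsat⟩
    refine ⟨hm, fun M' hM' hle => ?_⟩
    have hv : M'.verts = M.verts := by
      apply Set.eq_of_subset_of_subset _ hle.1
      intro x hx
      obtain ⟨y, hy, -⟩ := hM' hx
      rcases hsat x y (M'.adj_sub hy) with h | h
      · exact h
      · obtain ⟨z, hz, hz'⟩ := hm h
        have hyx : M'.Adj y x := hy.symm
        have hyz : M'.Adj y z := hle.2 hz
        obtain ⟨w, -, hw'⟩ := hM' (M'.edge_vert hyx)
        have := (hw' x hyx).trans (hw' z hyz).symm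
        subst this
        exact M.edge_vert hz.symm
    refine SimpleGraph.Subgraph.ext hv ?_
    funext x y
    apply propext
    constructor
    · intro hxy
      rcases hsat x y (M'.adj_sub hxy) with h | h
      · obtain ⟨z, hz, -⟩ := hm h
        obtain ⟨w, -, hw'⟩ := hM' (M'.edge_vert hxy)
        have := (hw' y hxy).trans (hw' z (hle.2 hz)).symm
        exact this ▸ hz
      · obtain ⟨z, hz, -⟩ := hm h
        obtain ⟨w, -, hw'⟩ := hM' (M'.edge_vert hxy.symm)
        have := (hw' x hxy.symm).trans (hw' z (hle.2 hz)).symm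
        exact (this ▸ hz).symm
    · exact fun h => hle.2 h

instance [Finite V] : Finite G.Subgraph :=
  Finite.of_injective (fun M => (M.verts, M.Adj))
    (fun M M' h => by
      rw [Prod.mk.injEq] at h
      exact SimpleGraph.Subgraph.ext h.1 h.2)

lemma exists_maximal_ge [Finite V] (M : G.Subgraph) (hM : M.IsMatching) :
    ∃ M', M ≤ M' ∧ IsMaximalMatching G M' := by
  obtain ⟨A, hA, hAmax⟩ := Set.Finite.exists_maximalFor id
    {M' : G.Subgraph | M'.IsMatching ∧ M ≤ M'} (Set.toFinite _) ⟨M, hM, le_refl M⟩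
  refine ⟨A, hA.2, hA.1, fun M'' hm hle => ?_⟩
  exact le_antisymm (hAmax ⟨hm, hA.2.trans hle⟩ hle) hle




/-- The unique partner in a matching. -/
lemma partner_eq {M : G.Subgraph} (hM : M.IsMatching) {a b c : V}
    (h1 : M.Adj a b) (h2 : M.Adj a c) : b = c := by
  obtain ⟨w, -, hw'⟩ := hM (M.edge_vert h1)
  exact (hw' b h1).trans (hw' c h2).symm

/-- Lift a subgraph of a smaller graph to a subgraph of a bigger one. -/
def liftSub {H : SimpleGraph V} (hle : H ≤ G) (N : H.Subgraph) : G.Subgraph where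
  verts := N.verts
  Adj := N.Adj
  adj_sub h := hle (N.adj_sub h)
  edge_vert := N.edge_vert
  symm := N.symm

lemma liftSub_edgeSet {H : SimpleGraph V} (hle : H ≤ G) (N : H.Subgraph) :
    (liftSub hle N).edgeSet = N.edgeSet := rfl

lemma liftSub_matching {H : SimpleGraph V} (hle : H ≤ G) {N : H.Subgraph}
    (hN : N.IsMatching) : (liftSub hle N).IsMatching := hN

lemma lift_maximal {u v : V} (huv : G.Adj u v) {N : (G.deleteEdges {s(u, v)}).Subgraph}
    (hN : IsMaximalMatching _ N) (hsat : u ∈ N.verts ∨ v ∈ N.verts) :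
    IsMaximalMatching G (liftSub (G.deleteEdges_le _) N) := by
  rw [maximal_iff] at hN ⊢
  refine ⟨hN.1, fun a b hab => ?_⟩
  by_cases h : s(a, b) = s(u, v)
  · rw [Sym2.eq_iff] at h
    rcases h with ⟨rfl, rfl⟩ | ⟨rfl, rfl⟩
    · exact hsat
    · exact hsat.symm
  · exact hN.2 a b (by rw [SimpleGraph.deleteEdges_adj]; exact ⟨hab, by simpa using h⟩)

/-- Remove the vertices `u`, `v` from a matching containing the edge `uv`. -/
def cut (M : G.Subgraph) (u v : V) : (G.deleteEdges {s(u, v)}).Subgraph where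
  verts := M.verts \ {u, v}
  Adj x y := M.Adj x y ∧ x ≠ u ∧ x ≠ v ∧ y ≠ u ∧ y ≠ v
  adj_sub h := by
    rw [SimpleGraph.deleteEdges_adj]
    refine ⟨M.adj_sub h.1, ?_⟩
    simp only [Set.mem_singleton_iff, Sym2.eq_iff]
    rintro (⟨rfl, rfl⟩ | ⟨rfl, rfl⟩)
    · exact h.2.1 rfl
    · exact h.2.2.1 rfl
  edge_vert h := ⟨M.edge_vert h.1, by simp [h.2.1, h.2.2.1]⟩
  symm := ⟨fun x y h => ⟨h.1.symm, h.2.2.2.1, h.2.2.2.2, h.2.1, h.2.2.1⟩⟩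

lemma cut_matching {M : G.Subgraph} (hM : M.IsMatching) {u v : V} (huv : M.Adj u v) :
    (cut M u v).IsMatching := by
  rintro x ⟨hx, hx'⟩
  simp only [Set.mem_insert_iff, Set.mem_singleton_iff, not_or] at hx'
  obtain ⟨y, hy, hy'⟩ := hM hx
  have hyu : y ≠ u := by
    rintro rfl
    exact hx'.2 (partner_eq hM hy.symm huv)
  have hyv : y ≠ v := by
    rintro rfl
    exact hx'.1 (partner_eq hM hy.symm huv.symm)
  refine ⟨y, ⟨hy, hx'.1, hx'.2, hyu, hyv⟩, ?_⟩
  rintro z ⟨hz, -⟩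
  exact hy' z hz

lemma cut_edgeSet {M : G.Subgraph} (hM : M.IsMatching) {u v : V} (huv : M.Adj u v) :
    (cut M u v).edgeSet = M.edgeSet \ {s(u, v)} := by
  ext e
  induction e using Sym2.ind with
  | _ x y =>
    simp only [SimpleGraph.Subgraph.mem_edgeSet, Set.mem_diff, Set.mem_singleton_iff,
      Sym2.eq_iff]
    show M.Adj x y ∧ _ ↔ _
    constructor
    · rintro ⟨h, h1, h2, h3, h4⟩
      refine ⟨h, ?_⟩
      rintro (⟨rfl, rfl⟩ | ⟨rfl, rfl⟩)
      · exact h1 rfl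
      · exact h2 rfl
    · rintro ⟨h, hne⟩
      refine ⟨h, ?_, ?_, ?_, ?_⟩
      · rintro rfl; exact hne (Or.inl ⟨rfl, partner_eq hM h huv⟩)
      · rintro rfl; exact hne (Or.inr ⟨rfl, partner_eq hM h huv.symm⟩)
      · rintro rfl; exact hne (Or.inr ⟨partner_eq hM h.symm huv, rfl⟩)
      · rintro rfl; exact hne (Or.inl ⟨partner_eq hM h.symm huv.symm, rfl⟩)

lemma cut_maximal {M : G.Subgraph} {u v : V} (hMmax : IsMaximalMatching G M)
    (huv : M.Adj u v)
    (hsat : ∀ w : V, w ∈ G.neighborSet u ∪ G.neighborSet v → w ∈ M.verts) :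
    IsMaximalMatching (G.deleteEdges {s(u, v)}) (cut M u v) := by
  rw [maximal_iff]
  refine ⟨cut_matching hMmax.1 huv, fun a b hab => ?_⟩
  rw [SimpleGraph.deleteEdges_adj, Set.mem_singleton_iff, Sym2.eq_iff] at hab
  obtain ⟨hab, hne⟩ := hab
  show a ∈ M.verts \ {u, v} ∨ b ∈ M.verts \ {u, v}
  by_cases hau : a = u
  · subst hau
    have hbv : b ≠ v := fun h => hne (Or.inl ⟨rfl, h⟩)
    exact Or.inr ⟨hsat b (Or.inl hab), by simp [hab.ne', hbv]⟩
  by_cases hav : a = v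
  · subst hav
    have hbu : b ≠ u := fun h => hne (Or.inr ⟨rfl, h⟩)
    exact Or.inr ⟨hsat b (Or.inr hab), by simp [hbu, hab.ne']⟩
  by_cases hbu : b = u
  · subst hbu
    exact Or.inl ⟨hsat a (Or.inl hab.symm), by simp [hau, hav]⟩
  by_cases hbv : b = v
  · subst hbv
    exact Or.inl ⟨hsat a (Or.inr hab.symm), by simp [hau, hav]⟩
  rcases (maximal_iff M).mp hMmax |>.2 a b hab with h | h
  · exact Or.inl ⟨h, by simp [hau, hav]⟩
  · exact Or.inr ⟨h, by simp [hbu, hbv]⟩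


lemma typeB_witness {u v : V} (huv : G.Adj u v)
    {N : (G.deleteEdges {s(u, v)}).Subgraph}
    (hN : IsMaximalMatching (G.deleteEdges {s(u, v)}) N)
    (hu : u ∉ N.verts) (hv : v ∉ N.verts) :
    ∃ M : G.Subgraph, M.IsMatching ∧ M.Adj u v ∧
      ∀ w : V, w ∈ G.neighborSet u ∪ G.neighborSet v → w ∈ M.verts := by
  have hLm : (liftSub (G.deleteEdges_le {s(u, v)}) N).IsMatching :=
    liftSub_matching _ hN.1
  refine ⟨addE _ u v huv, addE_matching hLm huv hu hv,
    Or.inr (Or.inl ⟨rfl, rfl⟩), ?_⟩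
  intro w hw
  rw [Set.mem_union, SimpleGraph.mem_neighborSet, SimpleGraph.mem_neighborSet] at hw
  show w ∈ (liftSub (G.deleteEdges_le {s(u, v)}) N).verts ∪ {u, v}
  by_cases hwu : w = u
  · exact Or.inr (by simp [hwu])
  by_cases hwv : w = v
  · exact Or.inr (by simp [hwv])
  rcases hw with hw | hw
  · have h' : (G.deleteEdges {s(u, v)}).Adj u w := by
      rw [SimpleGraph.deleteEdges_adj, Set.mem_singleton_iff, Sym2.eq_iff]
      refine ⟨hw, ?_⟩
      rintro (⟨-, h2⟩ | ⟨h1, -⟩)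
      · exact hwv h2
      · exact huv.ne h1
    rcases ((maximal_iff N).mp hN).2 u w h' with h | h
    · exact absurd h hu
    · exact Or.inl h
  · have h' : (G.deleteEdges {s(u, v)}).Adj v w := by
      rw [SimpleGraph.deleteEdges_adj, Set.mem_singleton_iff, Sym2.eq_iff]
      refine ⟨hw, ?_⟩
      rintro (⟨h1, -⟩ | ⟨-, h2⟩)
      · exact huv.ne' h1
      · exact hwu h2
    rcases ((maximal_iff N).mp hN).2 v w h' with h | h
    · exact absurd h hv
    · exact Or.inl h

lemma exists_outside_nbr (hconn : G.Connected) [Fintype V]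
    (hcard : 3 ≤ Fintype.card V) {u v : V} (huv : G.Adj u v) :
    ∃ w, w ≠ u ∧ w ≠ v ∧ (G.Adj u w ∨ G.Adj v w) := by
  by_contra hcon
  push_neg at hcon
  have hstep : ∀ w, (G.Adj u w ∨ G.Adj v w) → w = u ∨ w = v := by
    intro w hw
    by_contra h
    push_neg at h
    rcases hw with hw | hw
    · exact (hcon w h.1 h.2).1 hw
    · exact (hcon w h.1 h.2).2 hw
  obtain ⟨z, hz⟩ : ∃ z : V, z ≠ u ∧ z ≠ v := by
    classical
    by_contra h
    push_neg at h
    have hsub : (Finset.univ : Finset V) ⊆ {u, v} := by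
      intro z _
      rcases eq_or_ne z u with rfl | hne
      · simp
      · simp [h z hne]
    have h1 := Finset.card_le_card hsub
    rw [Finset.card_univ] at h1
    have h2 : ({u, v} : Finset V).card ≤ 2 :=
      (Finset.card_insert_le u {v}).trans (by simp)
    omega
  have key : ∀ {a c : V}, G.Walk a c → a = u ∨ a = v → c = u ∨ c = v := by
    intro a c p
    induction p with
    | nil => exact id
    | cons hadj p ih =>
      intro ha
      apply ih
      rcases ha with rfl | rfl
      · exact hstep _ (Or.inl hadj)
      · exact hstep _ (Or.inr hadj)
  obtain ⟨p⟩ := hconn.preconnected u z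
  rcases key p (Or.inl rfl) with h | h
  · exact hz.1 h
  · exact hz.2 h

end CritAux

/-- Let `G` be a connected equimatchable graph with at least 3 vertices and let `uv` be an
edge of `G`. Then `G − uv` is not equimatchable if and only if there is a matching of `G`
containing `uv` and saturating every vertex of `N(u) ∪ N(v)`. -/
theorem critical_edge_iff_matching {V : Type*} [Fintype V] (G : SimpleGraph V)
    (hconn : G.Connected) (hcard : 3 ≤ Fintype.card V) (heq : Equimatchable G)
    (u v : V) (huv : G.Adj u v) :
    ¬ Equimatchable (G.deleteEdges {s(u, v)}) ↔
      ∃ M : G.Subgraph, M.IsMatching ∧ M.Adj u v ∧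
        ∀ w : V, w ∈ G.neighborSet u ∪ G.neighborSet v → w ∈ M.verts := by
  constructor
  · intro hne
    unfold Equimatchable at hne
    push_neg at hne
    obtain ⟨N₁, N₂, h1, h2, hcard12⟩ := hne
    by_cases hA1 : u ∈ N₁.verts ∨ v ∈ N₁.verts
    · by_cases hA2 : u ∈ N₂.verts ∨ v ∈ N₂.verts
      · exact absurd (by
          have := heq _ _ (CritAux.lift_maximal huv h1 hA1)
            (CritAux.lift_maximal huv h2 hA2)
          rwa [CritAux.liftSub_edgeSet, CritAux.liftSub_edgeSet] at this) hcard12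
      · push_neg at hA2
        exact CritAux.typeB_witness huv h2 hA2.1 hA2.2
    · push_neg at hA1
      exact CritAux.typeB_witness huv h1 hA1.1 hA1.2
  · rintro ⟨M₀, hM₀, hM₀uv, hM₀sat⟩ hEQ
    obtain ⟨M, hle, hMmax⟩ := CritAux.exists_maximal_ge M₀ hM₀
    have hMuv : M.Adj u v := hle.2 hM₀uv
    have hMsat : ∀ w, w ∈ G.neighborSet u ∪ G.neighborSet v → w ∈ M.verts :=
      fun w hw => hle.1 (hM₀sat w hw)
    have hNmax := CritAux.cut_maximal hMmax hMuv hMsat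
    have e4 : (CritAux.cut M u v).edgeSet.ncard + 1 = M.edgeSet.ncard := by
      rw [CritAux.cut_edgeSet hMmax.1 hMuv]
      exact Set.ncard_diff_singleton_add_one
        (SimpleGraph.Subgraph.mem_edgeSet.mpr hMuv) (Set.toFinite _)
    have hbot : (⊥ : (G.deleteEdges {s(u, v)}).Subgraph).IsMatching := by
      intro x hx
      simp only [SimpleGraph.Subgraph.verts_bot, Set.mem_empty_iff_false] at hx
    obtain ⟨w, hwu, hwv, hw⟩ := CritAux.exists_outside_nbr hconn hcard huv
    rcases hw with hw | hw
    · have h' : (G.deleteEdges {s(u, v)}).Adj u w := by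
        rw [SimpleGraph.deleteEdges_adj, Set.mem_singleton_iff, Sym2.eq_iff]
        refine ⟨hw, ?_⟩
        rintro (⟨-, h2⟩ | ⟨h1, -⟩)
        · exact hwv h2
        · exact huv.ne h1
      obtain ⟨N', hPN', hN'max⟩ := CritAux.exists_maximal_ge (CritAux.addE ⊥ u w h')
        (CritAux.addE_matching hbot h' (by simp) (by simp))
      have huN' : u ∈ N'.verts := hPN'.1 (Or.inr (by simp))
      have e2 := heq _ M (CritAux.lift_maximal huv hN'max (Or.inl huN')) hMmax
      rw [CritAux.liftSub_edgeSet] at e2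
      have e3 := hEQ (CritAux.cut M u v) N' hNmax hN'max
      omega
    · have h' : (G.deleteEdges {s(u, v)}).Adj v w := by
        rw [SimpleGraph.deleteEdges_adj, Set.mem_singleton_iff, Sym2.eq_iff]
        refine ⟨hw, ?_⟩
        rintro (⟨h1, -⟩ | ⟨-, h2⟩)
        · exact huv.ne' h1
        · exact hwu h2
      obtain ⟨N', hPN', hN'max⟩ := CritAux.exists_maximal_ge (CritAux.addE ⊥ v w h')
        (CritAux.addE_matching hbot h' (by simp) (by simp))
      have hvN' : v ∈ N'.verts := hPN'.1 (Or.inr (by simp))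
      have e2 := heq _ M (CritAux.lift_maximal huv hN'max (Or.inr hvN')) hMmax
      rw [CritAux.liftSub_edgeSet] at e2
      have e3 := hEQ (CritAux.cut M u v) N' hNmax hN'max
      omega
end

section
/- Let G be a factor-critical edge-critical equimatchable graph. Then there is no edge uv of G with N(u) ∪ N(v) = V(G). -/
open SimpleGraph

/-- Lift a subgraph of a subgraph-graph `G'` to a subgraph of `G`. -/
def liftSub {V : Type*} {G G' : SimpleGraph V} (h : G' ≤ G) (M : G'.Subgraph) : G.Subgraph where
  verts := M.verts
  Adj := M.Adj
  adj_sub := fun hadj => h (M.adj_sub hadj)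
  edge_vert := fun hadj => M.edge_vert hadj
  symm := M.symm

lemma liftSub_isMatching {V : Type*} {G G' : SimpleGraph V} (h : G' ≤ G) (M : G'.Subgraph)
    (hm : M.IsMatching) : (liftSub h M).IsMatching := hm

lemma maximal_of_dominate {V : Type*} (G : SimpleGraph V) (M : G.Subgraph)
    (hm : M.IsMatching) (hd : ∀ x y, G.Adj x y → x ∈ M.verts ∨ y ∈ M.verts) :
    IsMaximalMatching G M := by
  refine ⟨hm, fun M'' hm'' hle => ?_⟩
  have hverts : M''.verts ⊆ M.verts := by
    intro a ha
    obtain ⟨b, hb, -⟩ := hm'' ha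
    rcases hd a b (M''.adj_sub hb) with h1 | h2
    · exact h1
    · obtain ⟨c, hc, hcu⟩ := hm h2
      have hc' : M''.Adj b c := hle.2 hc
      have : c = a := ExistsUnique.unique (hm'' (M''.edge_vert hb.symm)) hc' hb.symm
      exact M.edge_vert (this ▸ hc).symm
  refine SimpleGraph.Subgraph.ext (Set.Subset.antisymm hverts hle.1) ?_
  ext a b
  constructor
  · intro hab
    have haM : a ∈ M.verts := hverts (M''.edge_vert hab)
    obtain ⟨c, hc, -⟩ := hm haM
    have : c = b := ExistsUnique.unique (hm'' (hle.1 haM)) (hle.2 hc) hab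
    exact this ▸ hc
  · exact fun hab => hle.2 hab

lemma dominate_of_maximal {V : Type*} (G : SimpleGraph V) (M : G.Subgraph)
    (h : IsMaximalMatching G M) : ∀ x y, G.Adj x y → x ∈ M.verts ∨ y ∈ M.verts := by
  by_contra hcon
  push_neg at hcon
  obtain ⟨x, y, hxy, hx, hy⟩ := hcon
  set M'' : G.Subgraph := M ⊔ G.subgraphOfAdj hxy with hM''
  have hxyne : x ≠ y := hxy.ne
  have hm'' : M''.IsMatching := by
    intro a ha
    rcases ha with haM | haS
    · obtain ⟨b, hb, hbu⟩ := h.1 haM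
      refine ⟨b, Or.inl hb, fun c hc => ?_⟩
      rcases hc with hc | hc
      · exact hbu c hc
      · exfalso
        simp only [subgraphOfAdj_adj, Sym2.eq, Sym2.rel_iff', Prod.mk.injEq, Prod.swap_prod_mk] at hc
        rcases hc with ⟨rfl, rfl⟩ | ⟨rfl, rfl⟩
        · exact hx haM
        · exact hy haM
    · simp only [subgraphOfAdj_verts, Set.mem_insert_iff, Set.mem_singleton_iff] at haS
      rcases haS with rfl | rfl
      · refine ⟨y, Or.inr (by simp), fun c hc => ?_⟩
        rcases hc with hc | hc
        · exact absurd (M.edge_vert hc) hx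
        · simp only [subgraphOfAdj_adj, Sym2.eq, Sym2.rel_iff', Prod.mk.injEq, Prod.swap_prod_mk] at hc
          rcases hc with ⟨-, rfl⟩ | ⟨rfl, rfl⟩
          · rfl
          · exact absurd rfl hxyne
      · refine ⟨x, Or.inr (by simp [Sym2.eq_swap]), fun c hc => ?_⟩
        rcases hc with hc | hc
        · exact absurd (M.edge_vert hc) hy
        · simp only [subgraphOfAdj_adj, Sym2.eq, Sym2.rel_iff', Prod.mk.injEq, Prod.swap_prod_mk] at hc
          rcases hc with ⟨rfl, rfl⟩ | ⟨rfl, -⟩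
          · exact absurd rfl hxyne
          · rfl
  have := h.2 M'' hm'' le_sup_left
  have hxin : x ∈ M''.verts := Or.inr (by simp)
  rw [this] at hxin
  exact hx hxin

/-- Let `G` be a factor-critical edge-critical equimatchable graph. Then there is no edge `uv`
of `G` with `N(u) ∪ N(v) = V(G)`. -/
theorem fc_ece_no_dominating_edge {V : Type*} [Fintype V] (G : SimpleGraph V)
    (hfc : FactorCritical G) (hece : ECE G) :
    ¬ ∃ u v : V, G.Adj u v ∧ G.neighborSet u ∪ G.neighborSet v = Set.univ := by
  classical
  rintro ⟨u, v, huv, hdom⟩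
  have hne : u ≠ v := huv.ne
  -- |V| is odd
  have hodd : Odd (Fintype.card V) := by
    obtain ⟨P, hPm, hPs⟩ := hfc u
    haveI : Fintype P.verts := Fintype.ofFinite _
    have heven : Even P.verts.toFinset.card := hPm.even_card
    have hvs : P.verts = Set.univ := Set.eq_univ_of_forall hPs
    have hcard : P.verts.toFinset.card = Fintype.card V - 1 := by
      have h1 : P.verts.toFinset.card = Fintype.card {w : V | w ≠ u} := by
        rw [Set.toFinset_card]
        exact Fintype.card_congr ((Equiv.setCongr hvs).trans (Equiv.Set.univ _))
      rw [h1, Set.card_ne_eq]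
    have hpos : 1 ≤ Fintype.card V := Fintype.card_pos_iff.mpr ⟨u⟩
    rw [hcard] at heven
    rcases heven with ⟨k, hk⟩
    exact ⟨k, by omega⟩
  set G' := G.deleteEdges {s(u, v)} with hG'
  have hle : G' ≤ G := G.deleteEdges_le _
  apply hece.2 u v huv
  have key : ∀ M : G'.Subgraph, IsMaximalMatching G' M → IsMaximalMatching G (liftSub hle M) := by
    intro M hM
    apply maximal_of_dominate G _ (liftSub_isMatching hle M hM.1)
    intro x y hxy
    by_cases hcase : s(x, y) = s(u, v)
    · by_contra hcon
      push_neg at hcon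
      obtain ⟨hx, hy⟩ := hcon
      have huM : u ∉ M.verts ∧ v ∉ M.verts := by
        rw [Sym2.eq_iff] at hcase
        rcases hcase with ⟨rfl, rfl⟩ | ⟨rfl, rfl⟩
        · exact ⟨hx, hy⟩
        · exact ⟨hy, hx⟩
      have hverts : M.verts = Set.univ \ {u, v} := by
        apply Set.eq_of_subset_of_subset
        · intro w hw
          refine ⟨trivial, ?_⟩
          simp only [Set.mem_insert_iff, Set.mem_singleton_iff]
          rintro (rfl | rfl)
          · exact huM.1 hw
          · exact huM.2 hw
        · rintro w ⟨-, hw⟩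
          simp only [Set.mem_insert_iff, Set.mem_singleton_iff, not_or] at hw
          obtain ⟨hwu, hwv⟩ := hw
          have hwmem : w ∈ G.neighborSet u ∪ G.neighborSet v := by
            rw [hdom]; trivial
          rcases hwmem with hwu' | hwv'
          · have hadj : G'.Adj u w := by
              rw [hG', deleteEdges_adj]
              refine ⟨hwu', ?_⟩
              simp only [Set.mem_singleton_iff, Sym2.eq_iff]
              push_neg
              exact ⟨fun _ => hwv, fun h => absurd h hne⟩
            rcases dominate_of_maximal G' M hM u w hadj with h1 | h2
            · exact absurd h1 huM.1
            · exact h2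
          · have hadj : G'.Adj v w := by
              rw [hG', deleteEdges_adj]
              refine ⟨hwv', ?_⟩
              simp only [Set.mem_singleton_iff, Sym2.eq_iff]
              push_neg
              exact ⟨fun h => absurd h hne.symm, fun _ => hwu⟩
            rcases dominate_of_maximal G' M hM v w hadj with h1 | h2
            · exact absurd h1 huM.2
            · exact h2
      -- parity contradiction
      haveI : Fintype M.verts := Fintype.ofFinite _
      have heven : Even M.verts.toFinset.card := hM.1.even_card
      have hcm : M.verts.toFinset.card = Fintype.card V - 2 := by
        rw [← Set.ncard_eq_toFinset_card', hverts,
          Set.ncard_diff (Set.subset_univ _), Set.ncard_univ, Set.ncard_pair hne]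
        rw [Nat.card_eq_fintype_card]
      have h2le : 2 ≤ Fintype.card V := by
        have := Fintype.card_le_of_injective (fun b : Bool => if b then u else v)
          (by intro a b hab; cases a <;> cases b <;> simp_all)
        simpa using this
      rw [hcm] at heven
      rcases hodd with ⟨k, hk⟩
      rcases heven with ⟨m, hm⟩
      omega
    · have hadj : G'.Adj x y := by
        rw [hG', deleteEdges_adj]
        exact ⟨hxy, by simpa using hcase⟩
      exact dominate_of_maximal G' M hM x y hadj
  intro M₁ M₂ h₁ h₂
  have := hece.1 (liftSub hle M₁) (liftSub hle M₂) (key M₁ h₁) (key M₂ h₂)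
  exact this
end

section
/- Every connected randomly matchable graph with at least 4 vertices is edge-critical equimatchable. -/
open SimpleGraph

section Aux

variable {V : Type*} {G : SimpleGraph V}

lemma aux_walk_closed {S : Set V} (hS : ∀ ⦃a b⦄, G.Adj a b → a ∈ S → b ∈ S) :
    ∀ {x y : V}, G.Walk x y → x ∈ S → y ∈ S := by
  intro x y p
  induction p with
  | nil => exact id
  | cons h q ih => exact fun hx => ih (hS h hx)

lemma aux_edgeSet_eq {G₁ G₂ : SimpleGraph V} {A : G₁.Subgraph} {B : G₂.Subgraph}
    (h : A.Adj = B.Adj) : A.edgeSet = B.edgeSet := by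
  ext e
  induction e using Sym2.ind with
  | _ a b => rw [Subgraph.mem_edgeSet, Subgraph.mem_edgeSet, h]

lemma aux_matching_transfer {G₁ G₂ : SimpleGraph V} {A : G₁.Subgraph} {B : G₂.Subgraph}
    (hv : A.verts = B.verts) (ha : A.Adj = B.Adj) (h : A.IsMatching) : B.IsMatching := by
  intro v hvB
  rw [← hv] at hvB
  obtain ⟨w, hw, hu⟩ := h hvB
  exact ⟨w, by rw [← ha]; exact hw, fun y hy => hu y (by rw [ha]; exact hy)⟩

lemma aux_transfer (s : Set (Sym2 V)) (Q : G.Subgraph) (h : ∀ e ∈ s, e ∉ Q.edgeSet) :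
    ∃ Q' : (G.deleteEdges s).Subgraph, Q'.verts = Q.verts ∧ Q'.Adj = Q.Adj := by
  refine ⟨⟨Q.verts, Q.Adj, ?_, fun hab => Q.edge_vert hab, Q.symm⟩, rfl, rfl⟩
  intro a b hab
  rw [SimpleGraph.deleteEdges_adj]
  exact ⟨Q.adj_sub hab, fun he => h _ he (Subgraph.mem_edgeSet.mpr hab)⟩

lemma aux_perfect_maximal {P : G.Subgraph} (h : P.IsPerfectMatching) :
    IsMaximalMatching G P := by
  refine ⟨h.1, fun M' hM' hle => ?_⟩
  have hverts : M'.verts = P.verts := Set.Subset.antisymm (fun x _ => h.2 x) hle.1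
  refine SimpleGraph.Subgraph.ext hverts ?_
  ext a b
  constructor
  · intro hab
    obtain ⟨c, hc, huniq⟩ := h.1 (h.2 a)
    obtain ⟨c', hc', huniq'⟩ := hM' (M'.edge_vert hab)
    have hbc : b = c := by rw [huniq' b hab, huniq' c (hle.2 hc)]
    exact hbc ▸ hc
  · exact fun hab => hle.2 hab

lemma aux_matching_ncard [Fintype V] {M : G.Subgraph} (hM : M.IsMatching) :
    M.verts.ncard = 2 * M.edgeSet.ncard := by
  classical
  have hvfin : M.verts.Finite := Set.toFinite _
  have hefin : M.edgeSet.Finite := Set.toFinite _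
  rw [Set.ncard_eq_toFinset_card _ hvfin, Set.ncard_eq_toFinset_card _ hefin]
  set f : V → Sym2 V := fun x => if h : x ∈ M.verts then s(x, (hM h).choose) else s(x, x) with hf
  have hmap : ∀ x ∈ hvfin.toFinset, f x ∈ hefin.toFinset := by
    intro x hx
    rw [Set.Finite.mem_toFinset] at hx ⊢
    simp only [hf, dif_pos hx]
    exact Subgraph.mem_edgeSet.mpr (hM hx).choose_spec.1
  rw [Finset.card_eq_sum_card_fiberwise hmap]
  have hfib : ∀ e ∈ hefin.toFinset, (hvfin.toFinset.filter (fun x => f x = e)).card = 2 := by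
    intro e he
    rw [Set.Finite.mem_toFinset] at he
    revert he
    induction e using Sym2.ind with
    | _ a b =>
      intro he
      have hab : M.Adj a b := Subgraph.mem_edgeSet.mp he
      have hne : a ≠ b := hab.ne
      have hset : hvfin.toFinset.filter (fun x => f x = s(a, b)) = {a, b} := by
        ext x
        simp only [Finset.mem_filter, Set.Finite.mem_toFinset, Finset.mem_insert,
          Finset.mem_singleton]
        constructor
        · rintro ⟨hx, hfx⟩
          simp only [hf, dif_pos hx] at hfx
          rw [Sym2.eq_iff] at hfx
          rcases hfx with ⟨h1, _⟩ | ⟨h1, _⟩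
          · exact Or.inl h1
          · exact Or.inr h1
        · rintro (rfl | rfl)
          · have hx : x ∈ M.verts := M.edge_vert hab
            refine ⟨hx, ?_⟩
            simp only [hf, dif_pos hx]
            rw [(hM hx).choose_spec.2 b hab]
          · have hx : x ∈ M.verts := M.edge_vert hab.symm
            refine ⟨hx, ?_⟩
            simp only [hf, dif_pos hx]
            rw [(hM hx).choose_spec.2 a hab.symm]
            exact Sym2.eq_swap
      rw [hset, Finset.card_pair hne]
  rw [Finset.sum_congr rfl hfib, Finset.sum_const, smul_eq_mul, mul_comm]

lemma aux_perfect_card [Fintype V] {P : G.Subgraph} (hP : P.IsPerfectMatching) :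
    2 * P.edgeSet.ncard = Fintype.card V := by
  have h := aux_matching_ncard hP.1
  rw [hP.2.verts_eq_univ, Set.ncard_univ, Nat.card_eq_fintype_card] at h
  omega

end Aux

/-- Every connected randomly matchable graph with at least 4 vertices is edge-critical
equimatchable. -/
theorem randomlyMatchable_ece {V : Type*} [Fintype V] (G : SimpleGraph V)
    (hconn : G.Connected) (hcard : 4 ≤ Fintype.card V) (hrm : RandomlyMatchable G) :
    ECE G := by
  constructor
  · -- Equimatchable
    intro M₁ M₂ h₁ h₂
    obtain ⟨P₁, hle₁, hP₁⟩ := hrm M₁ h₁.1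
    obtain ⟨P₂, hle₂, hP₂⟩ := hrm M₂ h₂.1
    rw [← h₁.2 P₁ hP₁.1 hle₁, ← h₂.2 P₂ hP₂.1 hle₂]
    have c₁ := aux_perfect_card hP₁
    have c₂ := aux_perfect_card hP₂
    omega
  · -- edge-critical
    intro u v huv hEq
    -- Step 1: u has a neighbor w ≠ v
    have hw : ∃ w, G.Adj u w ∧ w ≠ v := by
      by_contra hcon
      push_neg at hcon
      have hz : ∃ z, z ≠ u ∧ z ≠ v := by
        by_contra hz
        push_neg at hz
        have hsub : (Set.univ : Set V) ⊆ {u, v} := fun z _ => by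
          by_cases h : z = u
          · exact Or.inl h
          · exact Or.inr (hz z h)
        have h2 : (Set.univ : Set V).ncard ≤ ({u, v} : Set V).ncard :=
          Set.ncard_le_ncard hsub (Set.toFinite _)
        rw [Set.ncard_univ, Nat.card_eq_fintype_card] at h2
        have h3 : ({u, v} : Set V).ncard ≤ 2 := by
          have := Set.ncard_insert_le u ({v} : Set V)
          simpa using this
        omega
      obtain ⟨z, hzu, hzv⟩ := hz
      by_cases hvnb : ∃ w, G.Adj v w ∧ w ≠ u
      · obtain ⟨w, hvw, hwu⟩ := hvnb
        obtain ⟨Q, hleQ, hQ⟩ := hrm (G.subgraphOfAdj hvw)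
          (Subgraph.IsMatching.subgraphOfAdj hvw)
        have hQvw : Q.Adj v w := hleQ.2 (by simp)
        obtain ⟨t, ht, hut⟩ := hQ.1 (hQ.2 u)
        have htv : t = v := hcon t (Q.adj_sub ht)
        have hQvu : Q.Adj v u := (htv ▸ ht).symm
        obtain ⟨t', ht', hut'⟩ := hQ.1 (hQ.2 v)
        exact hwu ((hut' w hQvw).trans (hut' u hQvu).symm)
      · push_neg at hvnb
        have hclosed : ∀ ⦃a b⦄, G.Adj a b → a ∈ ({u, v} : Set V) → b ∈ ({u, v} : Set V) := by
          intro a b hab ha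
          rcases ha with rfl | ha
          · exact Or.inr (hcon b hab)
          · rw [Set.mem_singleton_iff] at ha
            subst ha
            exact Or.inl (hvnb b hab)
        have hzmem := aux_walk_closed hclosed ((hconn u z).some) (Or.inl rfl)
        rcases hzmem with h | h
        · exact hzu h
        · rw [Set.mem_singleton_iff] at h
          exact hzv h
    obtain ⟨w, huw, hwv⟩ := hw
    -- Step 2: perfect matching Q of G avoiding uv
    obtain ⟨Q, hleQ, hQ⟩ := hrm (G.subgraphOfAdj huw) (Subgraph.IsMatching.subgraphOfAdj huw)
    have hQuw : Q.Adj u w := hleQ.2 (by simp)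
    have hQuv : ¬ Q.Adj u v := by
      intro h
      obtain ⟨t, ht, hut⟩ := hQ.1 (hQ.2 u)
      exact hwv ((hut w hQuw).trans (hut v h).symm)
    have hQs : ∀ e ∈ ({s(u, v)} : Set (Sym2 V)), e ∉ Q.edgeSet := by
      intro e he
      rw [Set.mem_singleton_iff] at he
      subst he
      rw [Subgraph.mem_edgeSet]
      exact hQuv
    obtain ⟨Q', hQ'v, hQ'a⟩ := aux_transfer {s(u, v)} Q hQs
    have hQ'pm : Q'.IsPerfectMatching := by
      refine ⟨aux_matching_transfer hQ'v.symm hQ'a.symm hQ.1, fun x => ?_⟩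
      rw [hQ'v]
      exact hQ.2 x
    -- Step 3: perfect matching P of G containing uv
    obtain ⟨P, hleP, hP⟩ := hrm (G.subgraphOfAdj huv) (Subgraph.IsMatching.subgraphOfAdj huv)
    have hPuv : P.Adj u v := hleP.2 (by simp)
    obtain ⟨t, htadj, hutP⟩ := hP.1 (hP.2 u)
    obtain ⟨t', htadj', hvtP⟩ := hP.1 (hP.2 v)
    have huP : ∀ y, P.Adj u y → y = v := fun y hy => (hutP y hy).trans (hutP v hPuv).symm
    have hvP : ∀ y, P.Adj v y → y = u := fun y hy => (hvtP y hy).trans (hvtP u hPuv.symm).symm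
    have hpartner : ∀ x, x ≠ u → x ≠ v → ∀ y, P.Adj x y → y ≠ u ∧ y ≠ v := by
      intro x hxu hxv y hxy
      constructor
      · rintro rfl
        exact hxv (huP x hxy.symm)
      · rintro rfl
        exact hxu (hvP x hxy.symm)
    set M₀ := P.deleteVerts {u, v} with hM₀
    have hM₀match : M₀.IsMatching := by
      intro x hx
      rw [hM₀, Subgraph.deleteVerts_verts] at hx
      have hxu : x ≠ u := fun h => hx.2 (Or.inl h)
      have hxv : x ≠ v := fun h => hx.2 (Or.inr h)
      obtain ⟨y, hy, huy⟩ := hP.1 hx.1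
      have hyuv := hpartner x hxu hxv y hy
      refine ⟨y, ?_, ?_⟩
      · show M₀.Adj x y
        rw [hM₀, Subgraph.deleteVerts_adj]
        refine ⟨hx.1, hx.2, P.edge_vert hy.symm, ?_, hy⟩
        rintro (h | h)
        · exact hyuv.1 h
        · exact hyuv.2 h
      · intro y' hy'
        have hy2 : M₀.Adj x y' := hy'
        rw [hM₀, Subgraph.deleteVerts_adj] at hy2
        exact huy y' hy2.2.2.2.2
    have hM₀edge : M₀.edgeSet = P.edgeSet \ {s(u, v)} := by
      ext e
      induction e using Sym2.ind with
      | _ a b =>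
        simp only [Subgraph.mem_edgeSet, Set.mem_diff, Set.mem_singleton_iff, hM₀,
          Subgraph.deleteVerts_adj]
        constructor
        · rintro ⟨ha1, ha2, hb1, hb2, hadj⟩
          refine ⟨hadj, fun heq => ?_⟩
          rw [Sym2.eq_iff] at heq
          rcases heq with ⟨rfl, rfl⟩ | ⟨rfl, rfl⟩
          · exact ha2 (Or.inl rfl)
          · exact ha2 (Or.inr rfl)
        · rintro ⟨hadj, hne⟩
          have hau : a ≠ u := by
            rintro rfl
            exact hne (by rw [huP b hadj])
          have hav : a ≠ v := by
            rintro rfl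
            exact hne (by rw [hvP b hadj]; exact Sym2.eq_swap)
          have hb := hpartner a hau hav b hadj
          refine ⟨P.edge_vert hadj, ?_, P.edge_vert hadj.symm, ?_, hadj⟩
          · rintro (h | h)
            · exact hau h
            · exact hav h
          · rintro (h | h)
            · exact hb.1 h
            · exact hb.2 h
    have hM₀s : ∀ e ∈ ({s(u, v)} : Set (Sym2 V)), e ∉ M₀.edgeSet := by
      intro e he
      rw [Set.mem_singleton_iff] at he
      subst he
      rw [hM₀edge]
      exact fun h => h.2 rfl
    obtain ⟨N, hNv, hNa⟩ := aux_transfer {s(u, v)} M₀ hM₀s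
    have hNmatch : N.IsMatching := aux_matching_transfer hNv.symm hNa.symm hM₀match
    -- N is a maximal matching of G - uv
    have hNvdesc : N.verts = {x : V | x ≠ u ∧ x ≠ v} := by
      rw [hNv, hM₀, Subgraph.deleteVerts_verts]
      ext x
      simp only [Set.mem_diff, Set.mem_insert_iff, Set.mem_singleton_iff, Set.mem_setOf_eq]
      constructor
      · rintro ⟨-, h⟩
        exact ⟨fun h1 => h (Or.inl h1), fun h2 => h (Or.inr h2)⟩
      · rintro ⟨h1, h2⟩
        refine ⟨hP.2 x, ?_⟩
        rintro (h | h)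
        · exact h1 h
        · exact h2 h
    have hNmax : IsMaximalMatching (G.deleteEdges {s(u, v)}) N := by
      refine ⟨hNmatch, fun M' hM' hle => ?_⟩
      have hsat : ∀ x, x ≠ u → x ≠ v → ∃ y, N.Adj x y := by
        intro x hxu hxv
        have hx : x ∈ N.verts := by
          rw [hNvdesc]
          exact ⟨hxu, hxv⟩
        obtain ⟨y, hy, -⟩ := hNmatch hx
        exact ⟨y, hy⟩
      have hno : ∀ x y, x = u ∨ x = v → ¬ M'.Adj x y := by
        intro x y hx hxy
        have hGxy := M'.adj_sub hxy
        rw [SimpleGraph.deleteEdges_adj, Set.mem_singleton_iff] at hGxy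
        have hyuv : y ≠ u ∧ y ≠ v := by
          rcases hx with rfl | rfl
          · refine ⟨fun h => hGxy.1.ne h.symm, fun h => hGxy.2 (by rw [h])⟩
          · refine ⟨fun h => hGxy.2 (by rw [h]; exact Sym2.eq_swap), fun h => hGxy.1.ne h.symm⟩
        obtain ⟨z, hz⟩ := hsat y hyuv.1 hyuv.2
        have hz' := hle.2 hz
        obtain ⟨c, hc, huc⟩ := hM' (M'.edge_vert hz')
        have hzx : z = x := (huc z hz').trans (huc x hxy.symm).symm
        have hzmem : z ∈ N.verts := N.edge_vert hz.symm
        rw [hNvdesc] at hzmem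
        rcases hx with rfl | rfl
        · exact hzmem.1 hzx
        · exact hzmem.2 hzx
      have hverts : M'.verts = N.verts := by
        refine Set.Subset.antisymm ?_ hle.1
        intro x hx
        obtain ⟨y, hy, -⟩ := hM' hx
        rw [hNvdesc]
        exact ⟨fun h => hno x y (Or.inl h) hy, fun h => hno x y (Or.inr h) hy⟩
      refine Subgraph.ext hverts ?_
      ext a b
      constructor
      · intro hab
        have ha : a ∈ N.verts := hverts ▸ M'.edge_vert hab
        obtain ⟨c, hc, -⟩ := hNmatch ha
        obtain ⟨c', hc', huc'⟩ := hM' (M'.edge_vert hab)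
        have : b = c := (huc' b hab).trans (huc' c (hle.2 hc)).symm
        exact this ▸ hc
      · exact fun h => hle.2 h
    -- contradiction via cardinalities
    have hc1 := aux_perfect_card hQ'pm
    have hc2 := aux_perfect_card hP
    have hNedge : N.edgeSet.ncard = P.edgeSet.ncard - 1 := by
      have h := (aux_edgeSet_eq hNa).trans hM₀edge
      rw [h, Set.ncard_diff_singleton_of_mem (Subgraph.mem_edgeSet.mpr hPuv)]
    have hfinal := hEq Q' N (aux_perfect_maximal hQ'pm) hNmax
    rw [hNedge] at hfinal
    omega
end

section
/- Every factor-critical edge-critical equimatchable graph with at least one edge has at least 7 vertices. -/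
open SimpleGraph

namespace FcEceAux

variable {V : Type*}

lemma adj_unique {G : SimpleGraph V} {M : G.Subgraph} (hM : M.IsMatching)
    {a b c : V} (h1 : M.Adj a b) (h2 : M.Adj a c) : b = c := by
  obtain ⟨w, -, hw⟩ := hM (M.edge_vert h1)
  rw [hw b h1, hw c h2]

lemma edge_eq_of_shared {G : SimpleGraph V} {M : G.Subgraph} (hM : M.IsMatching)
    {a b c d : V} (h1 : M.Adj a b) (h2 : M.Adj c d)
    (hsh : a = c ∨ a = d ∨ b = c ∨ b = d) : s(a, b) = s(c, d) := by
  rcases hsh with rfl | rfl | rfl | rfl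
  · rw [adj_unique hM h1 h2]
  · rw [adj_unique hM h1 h2.symm, Sym2.eq_swap]
  · rw [adj_unique hM h1.symm h2, Sym2.eq_swap]
  · rw [adj_unique hM h1.symm h2.symm]

lemma mem_edgeSet_exists {G : SimpleGraph V} {M : G.Subgraph} {e : Sym2 V}
    (he : e ∈ M.edgeSet) : ∃ a b, M.Adj a b ∧ e = s(a, b) := by
  revert he
  induction e using Sym2.ind with
  | _ a b => exact fun he => ⟨a, b, he, rfl⟩

lemma graph_mem_edgeSet_exists {G : SimpleGraph V} {e : Sym2 V}
    (he : e ∈ G.edgeSet) : ∃ a b, G.Adj a b ∧ e = s(a, b) := by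
  revert he
  induction e using Sym2.ind with
  | _ a b => exact fun he => ⟨a, b, he, rfl⟩

lemma matching_eq_of_le {G : SimpleGraph V} {M M' : G.Subgraph} (hM' : M'.IsMatching)
    (hle : M ≤ M') (hE : M'.edgeSet = M.edgeSet) : M' = M := by
  have hadj : ∀ a b, M'.Adj a b ↔ M.Adj a b := by
    intro a b
    rw [← Subgraph.mem_edgeSet, ← Subgraph.mem_edgeSet, hE]
  refine Subgraph.ext ?_ ?_
  · refine Set.Subset.antisymm (fun v hv => ?_) hle.1
    obtain ⟨w, hw, -⟩ := hM' hv
    exact M.edge_vert ((hadj v w).mp hw)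
  · funext a b
    exact propext (hadj a b)

lemma exists_maximal_matching [Finite V] {G : SimpleGraph V} {M : G.Subgraph}
    (hM : M.IsMatching) : ∃ M', IsMaximalMatching G M' ∧ M ≤ M' := by
  have hfin : ∀ N : G.Subgraph, N.edgeSet.Finite := fun N => Set.toFinite _
  set S : Set ℕ := {n | ∃ N : G.Subgraph, (N.IsMatching ∧ M ≤ N) ∧ N.edgeSet.ncard = n} with hS
  have hne : S.Nonempty := ⟨_, ⟨M, ⟨hM, le_rfl⟩, rfl⟩⟩
  have hbdd : BddAbove S := by
    refine ⟨Nat.card (Sym2 V), ?_⟩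
    rintro n ⟨N, -, rfl⟩
    calc N.edgeSet.ncard ≤ (Set.univ : Set (Sym2 V)).ncard :=
          Set.ncard_le_ncard (Set.subset_univ _) Set.finite_univ
      _ = Nat.card (Sym2 V) := Set.ncard_univ _
  obtain ⟨N, ⟨hN, hMN⟩, hcard⟩ := Nat.sSup_mem hne hbdd
  refine ⟨N, ⟨hN, ?_⟩, hMN⟩
  intro N' hN' hle
  have h1 : N'.edgeSet.ncard ≤ N.edgeSet.ncard := by
    rw [hcard]; exact le_csSup hbdd ⟨N', ⟨hN', hMN.trans hle⟩, rfl⟩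
  exact matching_eq_of_le hN' hle
    (Set.eq_of_subset_of_ncard_le (Subgraph.edgeSet_mono hle) h1 (hfin N')).symm

lemma not_adj_outside {G : SimpleGraph V} {M : G.Subgraph} (hmax : IsMaximalMatching G M)
    {a b : V} (hab : G.Adj a b) (ha : a ∉ M.verts) (hb : b ∉ M.verts) : False := by
  have hd : Disjoint M.support (G.subgraphOfAdj hab).support := by
    rw [hmax.1.support_eq_verts, support_subgraphOfAdj]
    rw [Set.disjoint_right]
    rintro x (rfl | rfl) <;> assumption
  have hM' := hmax.1.sup (Subgraph.IsMatching.subgraphOfAdj hab) hd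
  have heq := hmax.2 _ hM' le_sup_left
  have hle : G.subgraphOfAdj hab ≤ M := heq ▸ le_sup_right
  exact ha (hle.1 (by simp))

lemma maximal_edgeSet_nonempty {G : SimpleGraph V} {M : G.Subgraph}
    (hmax : IsMaximalMatching G M) {a b : V} (hab : G.Adj a b) : M.edgeSet.Nonempty := by
  by_contra h
  rw [Set.not_nonempty_iff_eq_empty] at h
  have hv : ∀ v, v ∉ M.verts := by
    intro v hv
    obtain ⟨w, hw, -⟩ := hmax.1 hv
    have : s(v, w) ∈ M.edgeSet := hw
    simp [h] at this
  exact not_adj_outside hmax hab (hv a) (hv b)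

lemma exists_matching_verts_ne {G : SimpleGraph V} (hfc : FactorCritical G) (v : V) :
    ∃ N : G.Subgraph, N.IsMatching ∧ N.verts = {u | u ≠ v} := by
  obtain ⟨M, hM⟩ := hfc v
  let f : G.induce {u | u ≠ v} →g G := ⟨Subtype.val, fun h => h⟩
  have hinj : Function.Injective f := Subtype.val_injective
  refine ⟨M.map f, hM.1.map f hinj, ?_⟩
  rw [Subgraph.map_verts]
  ext z
  constructor
  · rintro ⟨⟨u, hu⟩, -, rfl⟩
    exact hu
  · intro hz
    exact ⟨⟨z, hz⟩, hM.2 _, rfl⟩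

lemma matching_to_deleteEdges {G : SimpleGraph V} {s : Set (Sym2 V)} {N : G.Subgraph}
    (hN : N.IsMatching) (h : ∀ a b, N.Adj a b → s(a, b) ∉ s) :
    ∃ N' : (G.deleteEdges s).Subgraph, N'.IsMatching ∧ N'.verts = N.verts ∧
      N'.edgeSet = N.edgeSet := by
  refine ⟨⟨N.verts, N.Adj, fun {a b} hab => ?_, fun {a b} hab => N.edge_vert hab, N.symm⟩,
    ?_, rfl, rfl⟩
  · rw [deleteEdges_adj]
    exact ⟨N.adj_sub hab, h a b hab⟩
  · exact hN

lemma ncard_le_one_of_card_le [Fintype V] (h3 : Fintype.card V ≤ 3)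
    {G : SimpleGraph V} {M : G.Subgraph} (hM : M.IsMatching) : M.edgeSet.ncard ≤ 1 := by
  classical
  by_contra h
  push_neg at h
  rw [Set.one_lt_ncard_iff (Set.toFinite _)] at h
  obtain ⟨e₁, e₂, he₁, he₂, hne⟩ := h
  obtain ⟨a, b, hab, rfl⟩ := mem_edgeSet_exists he₁
  obtain ⟨c, d, hcd, rfl⟩ := mem_edgeSet_exists he₂
  have hsh : ¬(a = c ∨ a = d ∨ b = c ∨ b = d) := fun hsh => hne (edge_eq_of_shared hM hab hcd hsh)
  push_neg at hsh
  obtain ⟨hac, had, hbc, hbd⟩ := hsh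
  have h1 : a ≠ b := (M.adj_sub hab).ne
  have h2 : c ≠ d := (M.adj_sub hcd).ne
  have hcard : ({a, b, c, d} : Finset V).card = 4 := by
    rw [Finset.card_insert_of_notMem (by simp [h1, hac, had]),
      Finset.card_insert_of_notMem (by simp [hbc, hbd]),
      Finset.card_insert_of_notMem (by simp [h2]), Finset.card_singleton]
  have := Finset.card_le_univ ({a, b, c, d} : Finset V)
  rw [hcard] at this
  omega

lemma ncard_le_two_of_card_le [Fintype V] (h5 : Fintype.card V ≤ 5)
    {G : SimpleGraph V} {M : G.Subgraph} (hM : M.IsMatching) : M.edgeSet.ncard ≤ 2 := by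
  classical
  by_contra h
  push_neg at h
  rw [Set.two_lt_ncard_iff (Set.toFinite _)] at h
  obtain ⟨e₁, e₂, e₃, he₁, he₂, he₃, h12, h13, h23⟩ := h
  obtain ⟨a, b, hab, rfl⟩ := mem_edgeSet_exists he₁
  obtain ⟨c, d, hcd, rfl⟩ := mem_edgeSet_exists he₂
  obtain ⟨p, q, hpq, rfl⟩ := mem_edgeSet_exists he₃
  have hsh1 : ¬(a = c ∨ a = d ∨ b = c ∨ b = d) :=
    fun hsh => h12 (edge_eq_of_shared hM hab hcd hsh)
  have hsh2 : ¬(a = p ∨ a = q ∨ b = p ∨ b = q) :=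
    fun hsh => h13 (edge_eq_of_shared hM hab hpq hsh)
  have hsh3 : ¬(c = p ∨ c = q ∨ d = p ∨ d = q) :=
    fun hsh => h23 (edge_eq_of_shared hM hcd hpq hsh)
  push_neg at hsh1 hsh2 hsh3
  obtain ⟨hac, had, hbc, hbd⟩ := hsh1
  obtain ⟨hap, haq, hbp, hbq⟩ := hsh2
  obtain ⟨hcp, hcq, hdp, hdq⟩ := hsh3
  have h1 : a ≠ b := (M.adj_sub hab).ne
  have h2 : c ≠ d := (M.adj_sub hcd).ne
  have h3 : p ≠ q := (M.adj_sub hpq).ne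
  have hcard : ({a, b, c, d, p, q} : Finset V).card = 6 := by
    rw [Finset.card_insert_of_notMem (by simp [h1, hac, had, hap, haq]),
      Finset.card_insert_of_notMem (by simp [hbc, hbd, hbp, hbq]),
      Finset.card_insert_of_notMem (by simp [h2, hcp, hcq]),
      Finset.card_insert_of_notMem (by simp [hdp, hdq]),
      Finset.card_insert_of_notMem (by simp [h3]), Finset.card_singleton]
  have := Finset.card_le_univ ({a, b, c, d, p, q} : Finset V)
  rw [hcard] at this
  omega

lemma verts_of_edgeSet_singleton {G : SimpleGraph V} {M : G.Subgraph} (hM : M.IsMatching)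
    {x y : V} (hE : M.edgeSet = {s(x, y)}) : M.verts = {x, y} ∧ M.Adj x y := by
  have hAdj : M.Adj x y := Subgraph.mem_edgeSet.mp (by rw [hE]; rfl)
  refine ⟨Set.Subset.antisymm ?_ ?_, hAdj⟩
  · intro v hv
    obtain ⟨w, hw, -⟩ := hM hv
    have : s(v, w) ∈ M.edgeSet := hw
    rw [hE, Set.mem_singleton_iff] at this
    rcases Sym2.eq_iff.mp this with ⟨rfl, -⟩ | ⟨rfl, -⟩
    · exact Set.mem_insert _ _
    · exact Set.mem_insert_of_mem _ rfl
  · rintro v (rfl | rfl)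
    · exact M.edge_vert hAdj
    · exact M.edge_vert hAdj.symm

lemma odd_card [Fintype V] {G : SimpleGraph V} (hfc : FactorCritical G) (v : V) :
    Odd (Fintype.card V) := by
  classical
  obtain ⟨N, hN, hNv⟩ := exists_matching_verts_ne hfc v
  haveI : Fintype N.verts := Fintype.ofFinite _
  have heven : Even N.verts.ncard := by
    rw [Set.ncard_eq_toFinset_card']
    exact hN.even_card
  have hins : (insert v N.verts) = Set.univ := by
    rw [hNv]
    ext z
    by_cases hz : z = v <;> simp [hz]
  have hni : v ∉ N.verts := by rw [hNv]; simp
  have hcard := Set.ncard_insert_of_notMem hni (Set.toFinite _)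
  rw [hins, Set.ncard_univ, Nat.card_eq_fintype_card] at hcard
  obtain ⟨k, hk⟩ := heven
  exact ⟨k, by omega⟩

lemma case_three [Fintype V] {G : SimpleGraph V} (h3 : Fintype.card V = 3)
    (hfc : FactorCritical G) (hece : ECE G) {a b : V} (hab : G.Adj a b) : False := by
  classical
  have hne : a ≠ b := hab.ne
  obtain ⟨N, hN, hNv⟩ := exists_matching_verts_ne hfc b
  have haN : a ∈ N.verts := by rw [hNv]; exact hne
  obtain ⟨t, ht, -⟩ := hN haN
  have htb : t ≠ b := by
    have := N.edge_vert ht.symm; rw [hNv] at this; exact this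
  have hGat : G.Adj a t := N.adj_sub ht
  have hHat : (G.deleteEdges {s(a, b)}).Adj a t := by
    rw [deleteEdges_adj]
    refine ⟨hGat, ?_⟩
    rw [Set.mem_singleton_iff]
    intro h
    rcases Sym2.eq_iff.mp h with ⟨-, h'⟩ | ⟨h', -⟩
    · exact htb h'
    · exact hne h'
  apply hece.2 a b hab
  intro M₁ M₂ hm₁ hm₂
  have hub : ∀ M : (G.deleteEdges {s(a, b)}).Subgraph,
      IsMaximalMatching (G.deleteEdges {s(a, b)}) M → M.edgeSet.ncard = 1 := by
    intro M hm
    have h1 := ncard_le_one_of_card_le (le_of_eq h3) hm.1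
    have h2 := (Set.ncard_pos (Set.toFinite _)).mpr (maximal_edgeSet_nonempty hm hHat)
    omega
  rw [hub M₁ hm₁, hub M₂ hm₂]

lemma extract [Fintype V] {G : SimpleGraph V} (h5 : Fintype.card V = 5)
    (hfc : FactorCritical G) (heqm : Equimatchable G)
    (hece2 : ∀ u v : V, G.Adj u v → ¬ Equimatchable (G.deleteEdges {s(u, v)}))
    {a b : V} (hab : G.Adj a b) :
    ∃ x y : V, G.Adj x y ∧ x ≠ a ∧ x ≠ b ∧ y ≠ a ∧ y ≠ b ∧
      ∀ c d, G.Adj c d → s(c, d) ≠ s(a, b) → c = x ∨ c = y ∨ d = x ∨ d = y := by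
  classical
  obtain ⟨N, hN, hNv⟩ := exists_matching_verts_ne hfc a
  have haN : a ∉ N.verts := by rw [hNv]; simp
  have hbN : b ∈ N.verts := by rw [hNv]; exact hab.ne'
  obtain ⟨t₁, ht₁, -⟩ := hN hbN
  obtain ⟨z, hz⟩ : ∃ z, z ∉ ({a, b, t₁} : Finset V) := by
    by_contra h
    push_neg at h
    have huniv : ({a, b, t₁} : Finset V) = Finset.univ := Finset.eq_univ_iff_forall.mpr h
    have hle3 : ({a, b, t₁} : Finset V).card ≤ 3 := by
      have g1 := Finset.card_insert_le a ({b, t₁} : Finset V)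
      have g2 := Finset.card_insert_le b ({t₁} : Finset V)
      simp only [Finset.card_singleton] at g2
      omega
    rw [huniv, Finset.card_univ, h5] at hle3
    omega
  simp only [Finset.mem_insert, Finset.mem_singleton, not_or] at hz
  obtain ⟨hza, hzb, hzt₁⟩ := hz
  have hzN : z ∈ N.verts := by rw [hNv]; exact hza
  obtain ⟨t₂, ht₂, -⟩ := hN hzN
  have hedne : s(b, t₁) ≠ s(z, t₂) := by
    intro h
    rcases Sym2.eq_iff.mp h with ⟨h', -⟩ | ⟨-, h'⟩
    · exact hzb h'.symm
    · exact hzt₁ h'.symm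
  have hN2 : 1 < N.edgeSet.ncard := by
    rw [Set.one_lt_ncard_iff (Set.toFinite _)]
    exact ⟨s(b, t₁), s(z, t₂), ht₁, ht₂, hedne⟩
  have hNavoid : ∀ c d, N.Adj c d → s(c, d) ∉ ({s(a, b)} : Set (Sym2 V)) := by
    intro c d hcd h
    rw [Set.mem_singleton_iff] at h
    rcases Sym2.eq_iff.mp h with ⟨rfl, -⟩ | ⟨-, rfl⟩
    · exact haN (N.edge_vert hcd)
    · exact haN (N.edge_vert hcd.symm)
  obtain ⟨N', hN', hN'v, hN'E⟩ := matching_to_deleteEdges hN hNavoid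
  have hHbt : (G.deleteEdges {s(a, b)}).Adj b t₁ :=
    N'.adj_sub (Subgraph.mem_edgeSet.mp (by rw [hN'E]; exact ht₁))
  have hrange : ∀ M : (G.deleteEdges {s(a, b)}).Subgraph,
      IsMaximalMatching (G.deleteEdges {s(a, b)}) M →
      1 ≤ M.edgeSet.ncard ∧ M.edgeSet.ncard ≤ 2 := fun M hm =>
    ⟨(Set.ncard_pos (Set.toFinite _)).mpr (maximal_edgeSet_nonempty hm hHbt),
      ncard_le_two_of_card_le (le_of_eq h5) hm.1⟩
  have hnot := hece2 a b hab
  unfold Equimatchable at hnot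
  push_neg at hnot
  obtain ⟨Ma, Mb, hma, hmb, hdiff⟩ := hnot
  obtain ⟨Ms, hms, hms1⟩ : ∃ Ms : (G.deleteEdges {s(a, b)}).Subgraph,
      IsMaximalMatching (G.deleteEdges {s(a, b)}) Ms ∧ Ms.edgeSet.ncard = 1 := by
    have r1 := hrange Ma hma
    have r2 := hrange Mb hmb
    rcases (by omega : Ma.edgeSet.ncard = 1 ∨ Mb.edgeSet.ncard = 1) with h | h
    · exact ⟨Ma, hma, h⟩
    · exact ⟨Mb, hmb, h⟩
  obtain ⟨e, he⟩ := Set.ncard_eq_one.mp hms1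
  have hemem : e ∈ Ms.edgeSet := by rw [he]; rfl
  obtain ⟨x, y, hxyMs, rfl⟩ := mem_edgeSet_exists hemem
  obtain ⟨hverts, -⟩ := verts_of_edgeSet_singleton hms.1 he
  have hGxy : G.Adj x y := (deleteEdges_adj.mp (Ms.adj_sub hxyMs)).1
  have Dom : ∀ c d, G.Adj c d → s(c, d) ≠ s(a, b) → c = x ∨ c = y ∨ d = x ∨ d = y := by
    intro c d hcd hne'
    by_contra h
    push_neg at h
    obtain ⟨h1, h2, h3, h4⟩ := h
    have hHcd : (G.deleteEdges {s(a, b)}).Adj c d :=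
      deleteEdges_adj.mpr ⟨hcd, by rwa [Set.mem_singleton_iff]⟩
    exact not_adj_outside hms hHcd (by rw [hverts]; simp [h1, h2])
      (by rw [hverts]; simp [h3, h4])
  obtain ⟨M₄, hm₄, hle₄⟩ := exists_maximal_matching hN
  obtain ⟨M₃, hm₃, hle₃⟩ := exists_maximal_matching (Subgraph.IsMatching.subgraphOfAdj hGxy)
  have hxyM₃ : M₃.Adj x y := hle₃.2 (by simp)
  have hcard₃ : 1 < M₃.edgeSet.ncard := by
    rw [heqm M₃ M₄ hm₃ hm₄]
    have := Set.ncard_le_ncard (Subgraph.edgeSet_mono hle₄) (Set.toFinite _)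
    omega
  obtain ⟨e', he'mem, he'ne⟩ := Set.exists_ne_of_one_lt_ncard hcard₃ s(x, y)
  obtain ⟨c, d, hcdM₃, rfl⟩ := mem_edgeSet_exists he'mem
  have hnsh : ¬(c = x ∨ c = y ∨ d = x ∨ d = y) :=
    fun hsh => he'ne (edge_eq_of_shared hm₃.1 hcdM₃ hxyM₃ hsh)
  push_neg at hnsh
  obtain ⟨hcx, hcy, hdx, hdy⟩ := hnsh
  have hGcd : G.Adj c d := M₃.adj_sub hcdM₃
  have hcdab : s(c, d) = s(a, b) := by
    by_contra hne'
    rcases Dom c d hGcd hne' with h | h | h | h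
    · exact hcx h
    · exact hcy h
    · exact hdx h
    · exact hdy h
  have hmm := Sym2.eq_iff.mp hcdab
  have hxa : x ≠ a := by
    rcases hmm with ⟨h', -⟩ | ⟨-, h'⟩
    · exact fun hh => hcx (h'.trans hh.symm)
    · exact fun hh => hdx (h'.trans hh.symm)
  have hxb : x ≠ b := by
    rcases hmm with ⟨-, h'⟩ | ⟨h', -⟩
    · exact fun hh => hdx (h'.trans hh.symm)
    · exact fun hh => hcx (h'.trans hh.symm)
  have hya : y ≠ a := by
    rcases hmm with ⟨h', -⟩ | ⟨-, h'⟩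
    · exact fun hh => hcy (h'.trans hh.symm)
    · exact fun hh => hdy (h'.trans hh.symm)
  have hyb : y ≠ b := by
    rcases hmm with ⟨-, h'⟩ | ⟨h', -⟩
    · exact fun hh => hdy (h'.trans hh.symm)
    · exact fun hh => hcy (h'.trans hh.symm)
  exact ⟨x, y, hGxy, hxa, hxb, hya, hyb, Dom⟩

lemma case_five [Fintype V] {G : SimpleGraph V} (h5 : Fintype.card V = 5)
    (hfc : FactorCritical G) (hece : ECE G) {u v : V} (huv : G.Adj u v) : False := by
  classical
  obtain ⟨x, y, hxy, hxu, hxv, hyu, hyv, Dom⟩ := extract h5 hfc hece.1 hece.2 huv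
  have huv' : u ≠ v := huv.ne
  have hxy' : x ≠ y := hxy.ne
  obtain ⟨w, hw⟩ : ∃ w, w ∉ ({u, v, x, y} : Finset V) := by
    by_contra h
    push_neg at h
    have huniv : ({u, v, x, y} : Finset V) = Finset.univ := Finset.eq_univ_iff_forall.mpr h
    have hle4 : ({u, v, x, y} : Finset V).card ≤ 4 := by
      have g1 := Finset.card_insert_le u ({v, x, y} : Finset V)
      have g2 := Finset.card_insert_le v ({x, y} : Finset V)
      have g3 := Finset.card_insert_le x ({y} : Finset V)
      simp only [Finset.card_singleton] at g3
      omega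
    rw [huniv, Finset.card_univ, h5] at hle4
    omega
  simp only [Finset.mem_insert, Finset.mem_singleton, not_or] at hw
  obtain ⟨hwu, hwv, hwx, hwy⟩ := hw
  have hclass : ∀ z : V, z = u ∨ z = v ∨ z = x ∨ z = y ∨ z = w := by
    intro z
    have hcard : ({u, v, x, y, w} : Finset V).card = 5 := by
      rw [Finset.card_insert_of_notMem
          (by simp [huv', Ne.symm hxu, Ne.symm hyu, Ne.symm hwu]),
        Finset.card_insert_of_notMem (by simp [Ne.symm hxv, Ne.symm hyv, Ne.symm hwv]),
        Finset.card_insert_of_notMem (by simp [hxy', Ne.symm hwx]),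
        Finset.card_insert_of_notMem (by simp [Ne.symm hwy]), Finset.card_singleton]
    have huniv : ({u, v, x, y, w} : Finset V) = Finset.univ :=
      Finset.eq_univ_of_card _ (by rw [hcard, h5])
    have hz : z ∈ ({u, v, x, y, w} : Finset V) := huniv ▸ Finset.mem_univ z
    simpa using hz
  have hwnbr : ∀ t, G.Adj w t → t = x ∨ t = y := by
    intro t ht
    have hne : s(w, t) ≠ s(u, v) := by
      intro h
      rcases Sym2.eq_iff.mp h with ⟨h', -⟩ | ⟨h', -⟩
      · exact hwu h'
      · exact hwv h'
    rcases Dom w t ht hne with h | h | h | h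
    · exact absurd h hwx
    · exact absurd h hwy
    · exact Or.inl h
    · exact Or.inr h
  have hnb : ∀ p q : V, q ≠ p → ∃ t, G.Adj q t ∧ t ≠ p ∧ t ≠ q := by
    intro p q hqp
    obtain ⟨N, hN, hNv⟩ := exists_matching_verts_ne hfc p
    have hqN : q ∈ N.verts := by rw [hNv]; exact hqp
    obtain ⟨t, ht, -⟩ := hN hqN
    have htp : t ≠ p := by
      have := N.edge_vert ht.symm; rwa [hNv] at this
    exact ⟨t, N.adj_sub ht, htp, (N.adj_sub ht).ne'⟩
  have hwyE : G.Adj w y := by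
    obtain ⟨t, hadj, htx, htw⟩ := hnb x w hwx
    rcases hwnbr t hadj with h | h
    · exact absurd h htx
    · exact h ▸ hadj
  have hwxE : G.Adj w x := by
    obtain ⟨t, hadj, hty, htw⟩ := hnb y w hwy
    rcases hwnbr t hadj with h | h
    · exact h ▸ hadj
    · exact absurd h hty
  have hvE : G.Adj v x ∨ G.Adj v y := by
    obtain ⟨t, hadj, htu, htv⟩ := hnb u v huv.ne'
    rcases hclass t with h | h | h | h | h
    · exact absurd h htu
    · exact absurd h htv
    · exact Or.inl (h ▸ hadj)
    · exact Or.inr (h ▸ hadj)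
    · subst h
      rcases hwnbr v hadj.symm with h' | h'
      · exact absurd h'.symm hxv
      · exact absurd h'.symm hyv
  have huE : G.Adj u x ∨ G.Adj u y := by
    obtain ⟨t, hadj, htv, htu⟩ := hnb v u huv.ne
    rcases hclass t with h | h | h | h | h
    · exact absurd h htu
    · exact absurd h htv
    · exact Or.inl (h ▸ hadj)
    · exact Or.inr (h ▸ hadj)
    · subst h
      rcases hwnbr u hadj.symm with h' | h'
      · exact absurd h'.symm hxu
      · exact absurd h'.symm hyu
  -- ECE applied to the edge w-x
  obtain ⟨p, q, hpq, hpw, hpx, hqw, hqx, Dom2⟩ := extract h5 hfc hece.1 hece.2 hwxE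
  have hymem : y = p ∨ y = q := by
    have hne : s(w, y) ≠ s(w, x) := by
      intro h
      rcases Sym2.eq_iff.mp h with ⟨-, h'⟩ | ⟨h', -⟩
      · exact hxy' h'.symm
      · exact hwx h'
    rcases Dom2 w y hwyE hne with h | h | h | h
    · exact absurd h.symm hpw
    · exact absurd h.symm hqw
    · exact Or.inl h
    · exact Or.inr h
  obtain ⟨r, hyr, hrw, hrx, Dom2'⟩ : ∃ r, G.Adj y r ∧ r ≠ w ∧ r ≠ x ∧
      (∀ c d, G.Adj c d → s(c, d) ≠ s(w, x) → c = y ∨ c = r ∨ d = y ∨ d = r) := by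
    rcases hymem with h | h
    · refine ⟨q, by rw [h]; exact hpq, hqw, hqx, ?_⟩
      intro c d hcd hne
      rcases Dom2 c d hcd hne with h' | h' | h' | h'
      · exact Or.inl (h'.trans h.symm)
      · exact Or.inr (Or.inl h')
      · exact Or.inr (Or.inr (Or.inl (h'.trans h.symm)))
      · exact Or.inr (Or.inr (Or.inr h'))
    · refine ⟨p, by rw [h]; exact hpq.symm, hpw, hpx, ?_⟩
      intro c d hcd hne
      rcases Dom2 c d hcd hne with h' | h' | h' | h'
      · exact Or.inr (Or.inl h')
      · exact Or.inl (h'.trans h.symm)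
      · exact Or.inr (Or.inr (Or.inr h'))
      · exact Or.inr (Or.inr (Or.inl (h'.trans h.symm)))
  have hry : r ≠ y := hyr.ne'
  have hrmem : r = u ∨ r = v := by
    rcases hclass r with h | h | h | h | h
    · exact Or.inl h
    · exact Or.inr h
    · exact absurd h hrx
    · exact absurd h hry
    · exact absurd h hrw
  -- ECE applied to the edge w-y
  obtain ⟨p', q', hp'q', hp'w, hp'y, hq'w, hq'y, Dom3⟩ := extract h5 hfc hece.1 hece.2 hwyE
  have hxmem : x = p' ∨ x = q' := by
    have hne : s(w, x) ≠ s(w, y) := by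
      intro h
      rcases Sym2.eq_iff.mp h with ⟨-, h'⟩ | ⟨h', -⟩
      · exact hxy' h'
      · exact hwy h'
    rcases Dom3 w x hwxE hne with h | h | h | h
    · exact absurd h.symm hp'w
    · exact absurd h.symm hq'w
    · exact Or.inl h
    · exact Or.inr h
  have hadjpair : ∀ c1 c2 : V, (c1 = p' ∨ c1 = q') → (c2 = p' ∨ c2 = q') → c1 ≠ c2 →
      G.Adj c1 c2 := by
    intro c1 c2 h1 h2 hne
    rcases h1 with rfl | rfl <;> rcases h2 with rfl | rfl
    · exact absurd rfl hne
    · exact hp'q'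
    · exact hp'q'.symm
    · exact absurd rfl hne
  rcases hrmem with rfl | rfl
  · -- r = u
    have hnvx : ¬ G.Adj v x := by
      intro hvx
      have hne : s(v, x) ≠ s(w, x) := by
        intro hh
        rcases Sym2.eq_iff.mp hh with ⟨h', -⟩ | ⟨-, h'⟩
        · exact hwv h'.symm
        · exact hwx h'.symm
      rcases Dom2' v x hvx hne with h' | h' | h' | h'
      · exact hyv h'.symm
      · exact huv' h'.symm
      · exact hxy' h'
      · exact hxu h'
    have hvyE : G.Adj v y := hvE.resolve_left hnvx
    have hvmem : v = p' ∨ v = q' := by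
      have hne : s(v, y) ≠ s(w, y) := by
        intro hh
        rcases Sym2.eq_iff.mp hh with ⟨h', -⟩ | ⟨h', -⟩
        · exact hwv h'.symm
        · exact hyv h'.symm
      rcases Dom3 v y hvyE hne with h | h | h | h
      · exact Or.inl h
      · exact Or.inr h
      · exact absurd h.symm hp'y
      · exact absurd h.symm hq'y
    exact hnvx (hadjpair v x hvmem hxmem (fun hh => hxv hh.symm))
  · -- r = v
    have hnux : ¬ G.Adj u x := by
      intro hux
      have hne : s(u, x) ≠ s(w, x) := by
        intro hh
        rcases Sym2.eq_iff.mp hh with ⟨h', -⟩ | ⟨-, h'⟩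
        · exact hwu h'.symm
        · exact hwx h'.symm
      rcases Dom2' u x hux hne with h' | h' | h' | h'
      · exact hyu h'.symm
      · exact huv' h'
      · exact hxy' h'
      · exact hxv h'
    have huyE : G.Adj u y := huE.resolve_left hnux
    have humem : u = p' ∨ u = q' := by
      have hne : s(u, y) ≠ s(w, y) := by
        intro hh
        rcases Sym2.eq_iff.mp hh with ⟨h', -⟩ | ⟨h', -⟩
        · exact hwu h'.symm
        · exact hyu h'.symm
      rcases Dom3 u y huyE hne with h | h | h | h
      · exact Or.inl h
      · exact Or.inr h
      · exact absurd h.symm hp'y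
      · exact absurd h.symm hq'y
    exact hnux (hadjpair u x humem hxmem (fun hh => hxu hh.symm))

end FcEceAux

/-- Every factor-critical edge-critical equimatchable graph with at least one edge has at
least 7 vertices. -/
theorem fc_ece_seven_vertices {V : Type*} [Fintype V] (G : SimpleGraph V)
    (hfc : FactorCritical G) (hece : ECE G) (hedge : G.edgeSet.Nonempty) :
    7 ≤ Fintype.card V := by
  classical
  obtain ⟨e, he⟩ := hedge
  obtain ⟨a, b, hab, -⟩ := FcEceAux.graph_mem_edgeSet_exists he
  by_contra h
  push_neg at h
  have hodd := FcEceAux.odd_card hfc a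
  have h2 : 2 ≤ Fintype.card V := by
    have hpair : ({a, b} : Finset V).card = 2 := Finset.card_pair hab.ne
    have := Finset.card_le_univ ({a, b} : Finset V)
    rw [hpair] at this; simpa using this
  obtain ⟨k, hk⟩ := hodd
  rcases (by omega : Fintype.card V = 3 ∨ Fintype.card V = 5) with h3 | h5
  · exact FcEceAux.case_three h3 hfc hece hab
  · exact FcEceAux.case_five h5 hfc hece hab
end
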